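/- arXiv:math/0504091 — 6 statements merged into one kernel-verified Lean document; each statement's English description precedes it below -/
import Mathlib

section
/- Every positive integer m can be expressed in a unique way as a sum F_{k_1} + F_{k_2} + ... + F_{k_r} of Fibonacci numbers with k_1 ≥ 2 and k_{j+1} - k_j ≥ 2 for all 1 ≤ j < r (Zeckendorf's Theorem). -/
open List Nat

local instance : IsTrans ℕ fun a b => a + 2 ≤ b where
  trans _a _b _c hab hbc := le_trans (by omega) hbc

lemma zeck_rep_iff (l : List ℕ) :
    l.reverse.IsZeckendorfRep ↔
      (∀ k ∈ l, 2 ≤ k) ∧ List.Chain' (fun a b => a + 2 ≤ b) l := by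
  rw [List.IsZeckendorfRep]
  have : l.reverse ++ [0] = (0 :: l).reverse := by simp
  rw [this, List.isChain_reverse]
  constructor
  · intro h
    rw [List.isChain_cons] at h
    obtain ⟨h0, hc⟩ := h
    refine ⟨?_, hc⟩
    intro k hk
    rw [List.isChain_iff_pairwise] at hc
    match l, hk with
    | a :: l, hk =>
      have ha : 2 ≤ a := by simpa using h0 a rfl
      rcases List.mem_cons.1 hk with rfl | hk
      · exact ha
      · rw [List.pairwise_cons] at hc
        have := hc.1 k hk
        omega
  · rintro ⟨h2, hc⟩
    rw [List.isChain_cons]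
    exact ⟨fun y hy => by have := h2 y (List.mem_of_mem_head? hy); omega, hc⟩

/-- **Zeckendorf's Theorem.** Every positive integer `m` can be written uniquely as a sum
`F_{k_1} + ... + F_{k_r}` of Fibonacci numbers with `k_1 ≥ 2` and `k_{j+1} - k_j ≥ 2`.
We encode the indices `k_1 < k_2 < ... < k_r` as a list. -/
theorem zeckendorf (m : ℕ) (hm : 0 < m) :
    ∃! l : List ℕ, (∀ k ∈ l, 2 ≤ k) ∧ List.Chain' (fun a b => a + 2 ≤ b) l ∧
      (l.map Nat.fib).sum = m := by
  refine ⟨(Nat.zeckendorf m).reverse, ?_, ?_⟩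
  · have h := (zeck_rep_iff (Nat.zeckendorf m).reverse).1
      (by simpa using Nat.isZeckendorfRep_zeckendorf m)
    refine ⟨h.1, h.2, ?_⟩
    rw [List.map_reverse, List.sum_reverse, Nat.sum_zeckendorf_fib]
  · rintro l ⟨h2, hc, hsum⟩
    have hrep : l.reverse.IsZeckendorfRep := (zeck_rep_iff l).2 ⟨h2, hc⟩
    have := Nat.zeckendorf_sum_fib hrep
    rw [List.map_reverse, List.sum_reverse, hsum] at this
    rw [this, List.reverse_reverse]
end

section
/- There exists a constant K > 0 such that for all N ≥ 3 and every N-tuple of integers (a^1,...,a^N), not all zero, with n := max{|a^1|,...,|a^N|}, there is a sequence of at most K(N-1)(1 + log n) operations, each adding or subtracting one entry of the tuple to/from another entry, after which all but one entry of the N-tuple is zero. -/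
/-- One step of the (non-deterministic) subtractive Euclid algorithm on an `N`-tuple:
some entry `a p` is replaced by `a p + a q` or `a p - a q` for some `q ≠ p`. -/
def Step {N : ℕ} (a b : Fin N → ℤ) : Prop :=
  ∃ p q : Fin N, p ≠ q ∧
    (b = Function.update a p (a p + a q) ∨ b = Function.update a p (a p - a q))

namespace AE

/-- `Reach a b c` : `b` is reachable from `a` in at most `c` steps. -/
inductive Reach {N : ℕ} : (Fin N → ℤ) → (Fin N → ℤ) → ℕ → Prop
  | refl (a : Fin N → ℤ) (c : ℕ) : Reach a a c
  | head {a b d : Fin N → ℤ} {c : ℕ} : Step a b → Reach b d c → Reach a d (c + 1)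

theorem Reach.add_right {N : ℕ} {a b : Fin N → ℤ} {c : ℕ} (h : Reach a b c) (k : ℕ) :
    Reach a b (c + k) := by
  induction h with
  | refl a c => exact Reach.refl a (c + k)
  | head s _ ih =>
    have he : ∀ c' : ℕ, c' + 1 + k = c' + k + 1 := by omega
    rw [he]
    exact Reach.head s ih

theorem Reach.mono {N : ℕ} {a b : Fin N → ℤ} {c c' : ℕ} (h : Reach a b c) (hc : c ≤ c') :
    Reach a b c' := by
  obtain ⟨k, rfl⟩ := Nat.le.dest hc
  exact h.add_right k

theorem Reach.trans {N : ℕ} {a b d : Fin N → ℤ} {c₁ c₂ : ℕ}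
    (h₁ : Reach a b c₁) (h₂ : Reach b d c₂) : Reach a d (c₁ + c₂) := by
  induction h₁ with
  | refl a c => exact (h₂.add_right c).mono (by omega)
  | head s _ ih => exact (Reach.head s (ih h₂)).mono (by omega)

theorem Reach.single {N : ℕ} {a b : Fin N → ℤ} (h : Step a b) : Reach a b 1 :=
  Reach.head h (Reach.refl b 0)

/-- convert to a chain of functions. -/
theorem Reach.to_chain {N : ℕ} {a b : Fin N → ℤ} {c : ℕ} (h : Reach a b c) :
    ∃ k ≤ c, ∃ f : ℕ → Fin N → ℤ, f 0 = a ∧ (∀ i < k, Step (f i) (f (i + 1))) ∧ f k = b := by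
  induction h with
  | refl a c => exact ⟨0, Nat.zero_le c, fun _ => a, rfl, by omega, rfl⟩
  | @head a' b' d' c' s _ ih =>
    obtain ⟨k, hk, f, h0, hs, hk'⟩ := ih
    refine ⟨k + 1, by omega, fun i => if i = 0 then a' else f (i - 1), by simp, ?_, by simp; exact hk'⟩
    intro i hi
    rcases Nat.eq_zero_or_pos i with rfl | hpos
    · simpa [h0] using s
    · have h1 : ¬ (i = 0) := by omega
      have h2 : ¬ (i + 1 = 0) := by omega
      simp only [h1, h2, if_false]
      have := hs (i - 1) (by omega)
      have he : i - 1 + 1 = i := by omega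
      rw [he] at this
      exact this



-- continues namespace AE (will be concatenated)
theorem reach_step {N : ℕ} {p q : Fin N} (hpq : p ≠ q) {ε : ℤ} (hε : ε = 1 ∨ ε = -1)
    (a : Fin N → ℤ) : Reach a (Function.update a p (a p + ε * a q)) 1 := by
  apply Reach.single
  refine ⟨p, q, hpq, ?_⟩
  rcases hε with rfl | rfl
  · left; rw [one_mul]
  · right; rw [neg_mul, one_mul, ← sub_eq_add_neg]

theorem sign_sub (u v : ℤ) (h : v.natAbs ≤ u.natAbs) :
    ∃ ε : ℤ, (ε = 1 ∨ ε = -1) ∧ (u + ε * v).natAbs = u.natAbs - v.natAbs := by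
  rcases le_or_gt 0 u with hu | hu <;> rcases le_or_gt 0 v with hv | hv
  · exact ⟨-1, Or.inr rfl, by simp only [neg_mul, one_mul]; omega⟩
  · exact ⟨1, Or.inl rfl, by simp only [one_mul]; omega⟩
  · exact ⟨1, Or.inl rfl, by simp only [one_mul]; omega⟩
  · exact ⟨-1, Or.inr rfl, by simp only [neg_mul, one_mul]; omega⟩

theorem sign_add (u v : ℤ) :
    ∃ ε : ℤ, (ε = 1 ∨ ε = -1) ∧ (u + ε * v).natAbs = u.natAbs + v.natAbs := by
  rcases le_or_gt 0 u with hu | hu <;> rcases le_or_gt 0 v with hv | hv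
  · exact ⟨1, Or.inl rfl, by simp only [one_mul]; omega⟩
  · exact ⟨-1, Or.inr rfl, by simp only [neg_mul, one_mul]; omega⟩
  · exact ⟨-1, Or.inr rfl, by simp only [neg_mul, one_mul]; omega⟩
  · exact ⟨1, Or.inl rfl, by simp only [one_mul]; omega⟩

/-- the log potential of a natural number -/
noncomputable def Lr (n : ℕ) : ℝ := Real.log (n + 1)

theorem Lr_nonneg (n : ℕ) : 0 ≤ Lr n := Real.log_nonneg (by push_cast; linarith)

theorem Lr_mono {m n : ℕ} (h : m ≤ n) : Lr m ≤ Lr n :=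
  Real.log_le_log (by positivity) (by push_cast; exact_mod_cast Nat.add_le_add_right h 1)

theorem Lr_le_log2_add {m n : ℕ} (h : m ≤ 2 * n + 1) : Lr m ≤ Real.log 2 + Lr n := by
  have h1 : Lr m ≤ Real.log (2 * (n + 1)) := by
    apply Real.log_le_log (by positivity)
    push_cast
    have : (m : ℝ) ≤ 2 * n + 1 := by exact_mod_cast h
    linarith
  rwa [Real.log_mul (by norm_num) (by positivity)] at h1

theorem log2_le_one : Real.log 2 ≤ 1 := by
  have := Real.log_two_lt_d9
  linarith

theorem log2_ge : (2:ℝ)/3 ≤ Real.log 2 := by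
  have := Real.log_two_gt_d9
  linarith

/-- `log (4/3) ≥ 1/5`. -/
theorem log_four_thirds : (1:ℝ)/5 ≤ Real.log ((4:ℝ)/3) := by
  rw [Real.le_log_iff_exp_le (by norm_num)]
  have h5 : Real.exp ((1:ℝ)/5) ^ (5:ℕ) ≤ ((4:ℝ)/3) ^ (5:ℕ) := by
    rw [← Real.exp_nat_mul]
    have h1 : ((5:ℕ):ℝ) * (1/5) = 1 := by norm_num
    rw [h1]
    have h2 : ((4:ℝ)/3) ^ (5:ℕ) = 1024/243 := by norm_num
    rw [h2]
    have := Real.exp_one_lt_d9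
    linarith
  exact le_of_pow_le_pow_left₀ (by norm_num) (by norm_num) h5

/-- if `3 * b ≤ 4 * a` ... wait direction: need Lr gain : `4*(y+z+1) ≤ 3*(2y+z+1)` -/
theorem Lr_gain {m n : ℕ} (hm : 0 < m) (h : 4 * (m + 1) ≤ 3 * (n + 1)) :
    Lr m + 1/5 ≤ Lr n := by
  have h1 : Lr m + Real.log ((4:ℝ)/3) ≤ Lr n := by
    rw [Lr, Lr, ← Real.log_mul (by positivity) (by norm_num)]
    apply Real.log_le_log (by positivity)
    have : (4:ℝ) * (m + 1) ≤ 3 * (n + 1) := by exact_mod_cast h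
    push_cast
    nlinarith
  nlinarith [log_four_thirds]

/-- One accelerated Euclid round: with registers `p,q,r` holding values with
`|a r| ≤ |a q| ≤ |a p|`, `|a q| ≥ 1`, we can replace `a p` by some `x'` with
`|x'| < |a q|` and `|a q| + |x'| ≤ |a p|`, restoring `q`, `r`, in few steps. -/
theorem round : ∀ (m : ℕ), ∀ {N : ℕ} (p q r : Fin N), p ≠ q → p ≠ r → q ≠ r →
    ∀ a : Fin N → ℤ,
    2 * (a p).natAbs ≤ m + (a q).natAbs + (a r).natAbs →
    (a r).natAbs ≤ (a q).natAbs → (a q).natAbs ≤ (a p).natAbs → 1 ≤ (a q).natAbs →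
    ∃ (x' : ℤ) (c : ℕ), Reach a (Function.update a p x') c ∧
      x'.natAbs < (a q).natAbs ∧ (a q).natAbs + x'.natAbs ≤ (a p).natAbs ∧
      (c : ℝ) ≤ 15 * (1 + Lr (a p).natAbs - Lr ((a q).natAbs + (a r).natAbs)) + 1 := by
  intro m
  induction m using Nat.strong_induction_on with
  | _ m ih =>
    intro N p q r hpq hpr hqr a hm hzy hyx hy1
    rcases lt_or_ge (a p).natAbs ((a q).natAbs + (a r).natAbs) with hcase | hcase
    · -- single subtraction
      obtain ⟨ε, hε, hval⟩ := sign_sub (a p) (a q) hyx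
      refine ⟨a p + ε * a q, 1, reach_step hpq hε a, by omega, by omega, ?_⟩
      have h1 : Lr ((a q).natAbs + (a r).natAbs) ≤ Real.log 2 + Lr (a p).natAbs :=
        Lr_le_log2_add (by omega)
      have := log2_le_one
      push_cast
      linarith
    · -- climb
      obtain ⟨ε₁, hε₁, hval₁⟩ := sign_add (a r) (a q)
      set x := (a p).natAbs with hx
      set y := (a q).natAbs with hy
      set z := (a r).natAbs with hz
      set w := a r + ε₁ * a q with hw
      set b₁ := Function.update a r w with hb₁
      have hs₁ : Reach a b₁ 1 := reach_step (Ne.symm hqr) hε₁ a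
      have hb₁p : b₁ p = a p := Function.update_of_ne hpr _ _
      have hb₁q : b₁ q = a q := Function.update_of_ne hqr _ _
      have hb₁r : b₁ r = w := Function.update_self _ _ _
      -- measure decreases
      have hym : y ≤ m := by omega
      have hmlt : m - y < m := by omega
      -- recursive call with roles (p, r, q)
      obtain ⟨x₁, c₁, hr₁, h₁lt, h₁G, hc₁⟩ :=
        ih (m - y) hmlt p r q hpr hpq (Ne.symm hqr) b₁
          (by rw [hb₁p, hb₁r, hb₁q, hval₁]; omega)
          (by rw [hb₁r, hb₁q, hval₁]; omega)
          (by rw [hb₁p, hb₁r, hval₁]; omega)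
          (by rw [hb₁r, hval₁]; omega)
      rw [hb₁r, hval₁] at h₁lt
      rw [hb₁r, hb₁p, hval₁] at h₁G
      rw [hb₁p, hb₁r, hb₁q, hval₁] at hc₁
      -- descend step : restore register r
      set g₁ := Function.update b₁ p x₁ with hg₁
      have hg₁r : g₁ r = w := by rw [hg₁, Function.update_of_ne (Ne.symm hpr), hb₁r]
      have hg₁q : g₁ q = a q := by rw [hg₁, Function.update_of_ne (Ne.symm hpq), hb₁q]
      have hflip : -ε₁ = 1 ∨ -ε₁ = -1 := by
        rcases hε₁ with rfl | rfl
        · exact Or.inr (by norm_num)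
        · exact Or.inl (by norm_num)
      have hs₂ : Reach g₁ (Function.update g₁ r (g₁ r + (-ε₁) * g₁ q)) 1 :=
        reach_step (Ne.symm hqr) hflip g₁
      have hval₂ : g₁ r + (-ε₁) * g₁ q = a r := by rw [hg₁r, hg₁q, hw]; ring
      set g₃ := Function.update a p x₁ with hg₃
      have hg₂eq : Function.update g₁ r (g₁ r + (-ε₁) * g₁ q) = g₃ := by
        rw [hval₂, hg₁, hb₁, Function.update_comm (Ne.symm hpr) w x₁ a, Function.update_idem]
        rw [show a r = (Function.update a p x₁) r from (Function.update_of_ne (Ne.symm hpr) _ _).symm,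
          Function.update_eq_self, hg₃]
      rw [hg₂eq] at hs₂
      have hg₃p : g₃ p = x₁ := Function.update_self _ _ _
      have hg₃q : g₃ q = a q := Function.update_of_ne (Ne.symm hpq) _ _
      -- reach from a to g₃ in c₁ + 2
      have hreach₃ : Reach a g₃ (c₁ + 2) :=
        ((hs₁.trans hr₁).trans hs₂).mono (by omega)
      -- final adjustment
      have hfinal : ∃ (x' : ℤ) (c : ℕ), Reach a (Function.update a p x') c ∧
          x'.natAbs < y ∧ y + x'.natAbs ≤ x ∧ c ≤ c₁ + 3 := by
        rcases lt_or_ge x₁.natAbs y with hlt | hge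
        · exact ⟨x₁, c₁ + 2, hreach₃, hlt, by omega, by omega⟩
        · obtain ⟨ε₂, hε₂, hval₃⟩ := sign_sub x₁ (a q) (by rw [← hy]; omega)
          have hs₃ : Reach g₃ (Function.update g₃ p (g₃ p + ε₂ * g₃ q)) 1 :=
            reach_step hpq hε₂ g₃
          rw [hg₃p, hg₃q] at hs₃
          have : Function.update g₃ p (x₁ + ε₂ * a q) = Function.update a p (x₁ + ε₂ * a q) := by
            rw [hg₃, Function.update_idem]
          rw [this] at hs₃
          exact ⟨x₁ + ε₂ * a q, c₁ + 3, hreach₃.trans hs₃, by omega, by omega, le_refl _⟩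
      obtain ⟨x', c, hrc, hlt', hG', hcle⟩ := hfinal
      refine ⟨x', c, hrc, hlt', hG', ?_⟩
      -- cost arithmetic
      have he2 : z + y + (a q).natAbs = y + z + y := by omega
      rw [he2, ← hx] at hc₁
      have hgain : Lr (y + z) + 1/5 ≤ Lr (y + z + y) := by
        apply Lr_gain (by omega) (by omega)
      have hcR : (c : ℝ) ≤ (c₁ : ℝ) + 3 := by exact_mod_cast hcle
      linarith

theorem Lr_ge_log2 {m n : ℕ} (h : 2 * m + 1 ≤ n) : Real.log 2 + Lr m ≤ Lr n := by
  rw [Lr, Lr, ← Real.log_mul (by norm_num) (by positivity)]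
  apply Real.log_le_log (by positivity)
  have : (2:ℝ) * m + 1 ≤ (n:ℝ) := by exact_mod_cast h
  linarith

/-- potential function -/
noncomputable def fpot (x y z : ℕ) : ℝ := Lr x + Lr y + Lr z + Lr (max (max x y) z)

theorem fpot_nonneg (x y z : ℕ) : 0 ≤ fpot x y z := by
  have := Lr_nonneg x; have := Lr_nonneg y; have := Lr_nonneg z
  have := Lr_nonneg (max (max x y) z)
  unfold fpot; linarith

theorem fpot_swap₁ (x y z : ℕ) : fpot x y z = fpot y x z := by
  unfold fpot
  rw [show max (max x y) z = max (max y x) z from by omega]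
  ring

theorem fpot_swap₂ (x y z : ℕ) : fpot x y z = fpot x z y := by
  unfold fpot
  rw [show max (max x y) z = max (max x z) y from by omega]
  ring

/-- target of the triple-reduction: all but one of the registers `p,q,r` can be zeroed. -/
def Goal {N : ℕ} (a : Fin N → ℤ) (p q r : Fin N) : Prop :=
  ∃ (b : Fin N → ℤ) (c : ℕ) (t : Fin N), (t = p ∨ t = q ∨ t = r) ∧ Reach a b c ∧
    (∀ i, (i = p ∨ i = q ∨ i = r) → i ≠ t → b i = 0) ∧
    (∀ i, i ≠ p → i ≠ q → i ≠ r → b i = a i) ∧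
    (b t).natAbs ≤ max (max (a p).natAbs (a q).natAbs) (a r).natAbs ∧
    (c : ℝ) ≤ 24 * fpot (a p).natAbs (a q).natAbs (a r).natAbs

theorem Goal_perm₁ {N : ℕ} {a : Fin N → ℤ} {p q r : Fin N} (h : Goal a q p r) :
    Goal a p q r := by
  obtain ⟨b, c, t, ht, hr, hzero, hoff, hsurv, hc⟩ := h
  refine ⟨b, c, t, by tauto, hr, fun i hi hit => hzero i (by tauto) hit,
    fun i h1 h2 h3 => hoff i h2 h1 h3, le_trans hsurv (le_of_eq (by omega)), ?_⟩
  rw [fpot_swap₁]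
  exact hc

theorem Goal_perm₂ {N : ℕ} {a : Fin N → ℤ} {p q r : Fin N} (h : Goal a p r q) :
    Goal a p q r := by
  obtain ⟨b, c, t, ht, hr, hzero, hoff, hsurv, hc⟩ := h
  refine ⟨b, c, t, by tauto, hr, fun i hi hit => hzero i (by tauto) hit,
    fun i h1 h2 h3 => hoff i h1 h3 h2, le_trans hsurv (le_of_eq (by omega)), ?_⟩
  rw [fpot_swap₂]
  exact hc

theorem main_core (s : ℕ)
    (ih : ∀ s' : ℕ, s' < s → ∀ {N : ℕ} (p q r : Fin N), p ≠ q → p ≠ r → q ≠ r →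
      ∀ a : Fin N → ℤ, (a p).natAbs + (a q).natAbs + (a r).natAbs ≤ s' → Goal a p q r)
    {N : ℕ} (p q r : Fin N) (hpq : p ≠ q) (hpr : p ≠ r) (hqr : q ≠ r)
    (a : Fin N → ℤ) (hsum : (a p).natAbs + (a q).natAbs + (a r).natAbs ≤ s)
    (h1 : (a r).natAbs ≤ (a q).natAbs) (h2 : (a q).natAbs ≤ (a p).natAbs) :
    Goal a p q r := by
  rcases Nat.eq_zero_or_pos (a q).natAbs with hy0 | hy1
  · -- q and r are already zero
    refine ⟨a, 0, p, Or.inl rfl, Reach.refl a 0, ?_, fun i _ _ _ => rfl, by omega, ?_⟩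
    · intro i hi hit
      rcases hi with rfl | rfl | rfl
      · exact absurd rfl hit
      · exact Int.natAbs_eq_zero.mp hy0
      · exact Int.natAbs_eq_zero.mp (by omega)
    · have := fpot_nonneg (a p).natAbs (a q).natAbs (a r).natAbs
      push_cast
      linarith
  · -- perform a round, then recurse
    obtain ⟨x', c₁, hr₁, hlt, hG, hc₁⟩ :=
      round (2 * (a p).natAbs) p q r hpq hpr hqr a (by omega) h1 h2 hy1
    set a₂ := Function.update a p x' with ha₂
    have ha₂p : a₂ p = x' := Function.update_self _ _ _
    have ha₂q : a₂ q = a q := Function.update_of_ne (Ne.symm hpq) _ _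
    have ha₂r : a₂ r = a r := Function.update_of_ne (Ne.symm hpr) _ _
    obtain ⟨b, c₂, t, ht, hr₂, hzero, hoff, hsurv, hc₂⟩ :=
      ih (x'.natAbs + (a q).natAbs + (a r).natAbs) (by omega) p q r hpq hpr hqr a₂
        (by rw [ha₂p, ha₂q, ha₂r])
    rw [ha₂p, ha₂q, ha₂r] at hsurv hc₂
    refine ⟨b, c₁ + c₂, t, ht, hr₁.trans hr₂, hzero, ?_, ?_, ?_⟩
    · intro i hip hiq hir
      rw [hoff i hip hiq hir, ha₂, Function.update_of_ne hip]
    · exact le_trans hsurv (by omega)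
    · -- cost accounting
      have hmax1 : max (max (a p).natAbs (a q).natAbs) (a r).natAbs = (a p).natAbs := by omega
      have hmax2 : max (max x'.natAbs (a q).natAbs) (a r).natAbs = (a q).natAbs := by omega
      unfold fpot at hc₂ ⊢
      rw [hmax1]
      rw [hmax2] at hc₂
      have hg2 : Real.log 2 + Lr x'.natAbs ≤ Lr (a p).natAbs := Lr_ge_log2 (by omega)
      have hmono : Lr (a q).natAbs ≤ Lr ((a q).natAbs + (a r).natAbs) := Lr_mono (by omega)
      have hBA : Lr (a q).natAbs ≤ Lr (a p).natAbs := Lr_mono h2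
      have hl2 := log2_ge
      push_cast
      linarith

theorem main : ∀ (s : ℕ), ∀ {N : ℕ} (p q r : Fin N), p ≠ q → p ≠ r → q ≠ r →
    ∀ a : Fin N → ℤ, (a p).natAbs + (a q).natAbs + (a r).natAbs ≤ s → Goal a p q r := by
  intro s
  induction s using Nat.strong_induction_on with
  | _ s ih =>
    intro N p q r hpq hpr hqr a hsum
    rcases le_total (a r).natAbs (a q).natAbs with hrq | hrq
    · rcases le_total (a q).natAbs (a p).natAbs with hqp | hqp
      · exact main_core s ih p q r hpq hpr hqr a hsum hrq hqp
      · rcases le_total (a r).natAbs (a p).natAbs with hrp | hrp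
        · exact Goal_perm₁ (main_core s ih q p r (Ne.symm hpq) hqr hpr a (by omega) hrp hqp)
        · exact Goal_perm₁ (Goal_perm₂
            (main_core s ih q r p hqr (Ne.symm hpq) (Ne.symm hpr) a (by omega) hrp hrq))
    · rcases le_total (a r).natAbs (a p).natAbs with hrp | hrp
      · exact Goal_perm₂ (main_core s ih p r q hpr hpq (Ne.symm hqr) a (by omega) hrq hrp)
      · rcases le_total (a q).natAbs (a p).natAbs with hqp | hqp
        · exact Goal_perm₂ (Goal_perm₁
            (main_core s ih r p q (Ne.symm hpr) (Ne.symm hqr) hpq a (by omega) hqp hrp))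
        · exact Goal_perm₁ (Goal_perm₂ (Goal_perm₁
            (main_core s ih r q p (Ne.symm hqr) (Ne.symm hpr) (Ne.symm hpq) a (by omega) hqp hrq)))

theorem Lr_le_one_add_log {M : ℕ} (hM : 1 ≤ M) : Lr M ≤ 1 + Real.log M := by
  have h1 : Lr M ≤ Real.log (2 * M) := by
    apply Real.log_le_log (by positivity)
    have : (1:ℝ) ≤ (M:ℝ) := by exact_mod_cast hM
    linarith
  rw [Real.log_mul (by norm_num) (by positivity)] at h1
  have := log2_le_one
  linarith

theorem fpot_le {x y z M : ℕ} (hM : 1 ≤ M) (hx : x ≤ M) (hy : y ≤ M) (hz : z ≤ M) :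
    fpot x y z ≤ 4 * (1 + Real.log M) := by
  have h4 : max (max x y) z ≤ M := by omega
  have l1 := Lr_mono hx
  have l2 := Lr_mono hy
  have l3 := Lr_mono hz
  have l4 := Lr_mono h4
  have l5 := Lr_le_one_add_log hM
  unfold fpot
  linarith

theorem driver {N : ℕ} (M : ℕ) (hM : 1 ≤ M) :
    ∀ k : ℕ, 3 ≤ k → k ≤ N → ∀ a : Fin N → ℤ, (∀ i, (a i).natAbs ≤ M) →
    ∃ (b : Fin N → ℤ) (c : ℕ) (t : Fin N), (t : ℕ) < k ∧ Reach a b c ∧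
      (∀ i : Fin N, (i : ℕ) < k → i ≠ t → b i = 0) ∧
      (∀ i : Fin N, k ≤ (i : ℕ) → b i = a i) ∧
      (∀ i, (b i).natAbs ≤ M) ∧
      (c : ℝ) ≤ ((k : ℝ) - 2) * (96 * (1 + Real.log M)) := by
  intro k hk3
  induction k, hk3 using Nat.le_induction with
  | base =>
    intro hkN a ha
    have h0 : (0:ℕ) < N := by omega
    have h1 : (1:ℕ) < N := by omega
    have h2 : (2:ℕ) < N := by omega
    set p : Fin N := ⟨0, h0⟩ with hp
    set q : Fin N := ⟨1, h1⟩ with hq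
    set r : Fin N := ⟨2, h2⟩ with hr
    have hpq : p ≠ q := by simp [hp, hq, Fin.ext_iff]
    have hpr : p ≠ r := by simp [hp, hr, Fin.ext_iff]
    have hqr : q ≠ r := by simp [hq, hr, Fin.ext_iff]
    obtain ⟨b, c, t, ht, hreach, hzero, hoff, hsurv, hc⟩ :=
      main ((a p).natAbs + (a q).natAbs + (a r).natAbs) p q r hpq hpr hqr a le_rfl
    have hmem : ∀ i : Fin N, (i : ℕ) < 3 → i = p ∨ i = q ∨ i = r := by
      intro i hi
      have : (i:ℕ) = 0 ∨ (i:ℕ) = 1 ∨ (i:ℕ) = 2 := by omega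
      rcases this with h | h | h
      · exact Or.inl (Fin.ext h)
      · exact Or.inr (Or.inl (Fin.ext h))
      · exact Or.inr (Or.inr (Fin.ext h))
    have hnmem : ∀ i : Fin N, 3 ≤ (i : ℕ) → i ≠ p ∧ i ≠ q ∧ i ≠ r := by
      intro i hi
      refine ⟨?_, ?_, ?_⟩ <;> (intro he; rw [he] at hi; simp [hp, hq, hr] at hi)
    refine ⟨b, c, t, ?_, hreach, fun i hi hit => hzero i (hmem i hi) hit, ?_, ?_, ?_⟩
    · rcases ht with rfl | rfl | rfl <;> simp [hp, hq, hr]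
    · intro i hi
      obtain ⟨e1, e2, e3⟩ := hnmem i hi
      exact hoff i e1 e2 e3
    · intro i
      by_cases hit : i = t
      · subst hit
        refine le_trans hsurv ?_
        have := ha p; have := ha q; have := ha r
        omega
      · by_cases hi3 : (i:ℕ) < 3
        · rw [hzero i (hmem i hi3) hit]; simp
        · obtain ⟨e1, e2, e3⟩ := hnmem i (by omega)
          rw [hoff i e1 e2 e3]; exact ha i
    · have hfle : fpot (a p).natAbs (a q).natAbs (a r).natAbs ≤ 4 * (1 + Real.log M) :=
        fpot_le hM (ha p) (ha q) (ha r)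
      norm_num
      linarith
  | succ k hk3 ihk =>
    intro hkN a ha
    obtain ⟨b, c, t, htk, hreach, hzero, hoff, hbound, hc⟩ := ihk (by omega) a ha
    have hkN' : (k:ℕ) < N := by omega
    set tgt : Fin N := ⟨k, hkN'⟩ with htgt
    have h0 : (0:ℕ) < N := by omega
    have h1 : (1:ℕ) < N := by omega
    set z0 : Fin N := if (t : ℕ) = 0 then ⟨1, h1⟩ else ⟨0, h0⟩ with hz0
    have hz0val : (z0 : ℕ) ≤ 1 := by
      rw [hz0]; split <;> simp
    have hz0t : z0 ≠ t := by
      rw [hz0]; split <;> (rename_i hh; intro he; rw [← he] at hh; simp at hh)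
    have hz0zero : b z0 = 0 := hzero z0 (by omega) hz0t
    have httgt : t ≠ tgt := by
      intro he
      have : (t:ℕ) = k := by rw [he]
      omega
    have htz0 : t ≠ z0 := Ne.symm hz0t
    have htgtz0 : tgt ≠ z0 := by
      intro he
      have : (tgt:ℕ) = (z0:ℕ) := by rw [he]
      simp [htgt] at this
      omega
    obtain ⟨b₂, c₂, t₂, ht₂, hreach₂, hzero₂, hoff₂, hsurv₂, hc₂⟩ :=
      main ((b t).natAbs + (b tgt).natAbs + (b z0).natAbs) t tgt z0 httgt htz0 htgtz0 b le_rfl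
    have hnottriple : ∀ i : Fin N, i ≠ t → (i:ℕ) ≠ k → 1 < (i:ℕ) ∨ ((i:ℕ) ≤ 1 ∧ i ≠ z0) →
        i ≠ t ∧ i ≠ tgt ∧ i ≠ z0 := by
      intro i hit hik hcase
      refine ⟨hit, ?_, ?_⟩
      · intro he; rw [he] at hik; simp [htgt] at hik
      · intro he
        rcases hcase with hgt | ⟨_, hne⟩
        · rw [he] at hgt; omega
        · exact hne he
    refine ⟨b₂, c + c₂, t₂, ?_, hreach.trans hreach₂, ?_, ?_, ?_, ?_⟩
    · rcases ht₂ with rfl | rfl | rfl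
      · omega
      · simp [htgt]
      · omega
    · -- zeros below k+1
      intro i hik1 hit₂
      by_cases hi : i = t ∨ i = tgt ∨ i = z0
      · exact hzero₂ i hi hit₂
      · push_neg at hi
        obtain ⟨e1, e2, e3⟩ := hi
        rw [hoff₂ i e1 e2 e3]
        apply hzero i ?_ e1
        have : (i:ℕ) ≠ k := by intro he; exact e2 (Fin.ext (by simp [htgt, he]))
        omega
    · -- untouched above k+1
      intro i hik
      have e1 : i ≠ t := by intro he; rw [he] at hik; omega
      have e2 : i ≠ tgt := by
        intro he; rw [he] at hik
        have h9 : (k:ℕ) + 1 ≤ k := by simpa [htgt] using hik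
        omega
      have e3 : i ≠ z0 := by intro he; rw [he] at hik; omega
      rw [hoff₂ i e1 e2 e3]
      exact hoff i (by omega)
    · -- bounds
      intro i
      by_cases hit : i = t₂
      · subst hit
        refine le_trans hsurv₂ ?_
        have := hbound t; have := hbound tgt; have := hbound z0
        omega
      · by_cases hi : i = t ∨ i = tgt ∨ i = z0
        · rw [hzero₂ i hi hit]; simp
        · push_neg at hi
          obtain ⟨e1, e2, e3⟩ := hi
          rw [hoff₂ i e1 e2 e3]
          exact hbound i
    · -- cost
      have hfle : fpot (b t).natAbs (b tgt).natAbs (b z0).natAbs ≤ 4 * (1 + Real.log M) :=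
        fpot_le hM (hbound t) (hbound tgt) (hbound z0)
      have hlog : (0:ℝ) ≤ Real.log M := Real.log_nonneg (by exact_mod_cast hM)
      push_cast
      linarith

end AE

/-- There is a constant `K > 0` such that for all `N ≥ 3` and every `N`-tuple of integers,
not all zero, with `n` the maximum absolute value of the entries, there is a sequence of at
most `K(N-1)(1 + log n)` additions/subtractions of one entry to/from another after which
all but one entry is zero. -/
theorem accelerated_euclid :
    ∃ K : ℝ, 0 < K ∧ ∀ (N : ℕ), 3 ≤ N → ∀ a : Fin N → ℤ, a ≠ 0 →
      ∃ (k : ℕ) (f : ℕ → Fin N → ℤ), f 0 = a ∧ (∀ i < k, Step (f i) (f (i + 1))) ∧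
        (∃ p : Fin N, ∀ q, q ≠ p → f k q = 0) ∧
        (k : ℝ) ≤ K * ((N : ℝ) - 1) *
          (1 + Real.log ((Finset.univ.sup fun i => (a i).natAbs : ℕ) : ℝ)) := by
  refine ⟨96, by norm_num, ?_⟩
  intro N hN a ha
  set M : ℕ := Finset.univ.sup fun i => (a i).natAbs with hMdef
  have hbound : ∀ i, (a i).natAbs ≤ M := fun i =>
    Finset.le_sup (f := fun i => (a i).natAbs) (Finset.mem_univ i)
  have hM : 1 ≤ M := by
    obtain ⟨i, hi⟩ := Function.ne_iff.mp ha
    have h1 : 1 ≤ (a i).natAbs := by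
      have : a i ≠ 0 := hi
      omega
    exact le_trans h1 (hbound i)
  obtain ⟨b, c, t, _, hreach, hzero, _, _, hc⟩ :=
    AE.driver M hM N hN le_rfl a hbound
  obtain ⟨k, hkc, f, hf0, hsteps, hfk⟩ := hreach.to_chain
  refine ⟨k, f, hf0, hsteps, ⟨t, fun j hj => by rw [hfk]; exact hzero j j.isLt hj⟩, ?_⟩
  have hlog : (0:ℝ) ≤ Real.log M := Real.log_nonneg (by exact_mod_cast hM)
  have hkR : (k:ℝ) ≤ (c:ℝ) := by exact_mod_cast hkc
  have hNR : (3:ℝ) ≤ (N:ℝ) := by exact_mod_cast hN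
  have h1log : (0:ℝ) ≤ 1 + Real.log M := by linarith
  nlinarith [hc, mul_le_mul_of_nonneg_right (by linarith : ((N:ℝ) - 2) ≤ ((N:ℝ) - 1)) (by linarith : (0:ℝ) ≤ 96 * (1 + Real.log M))]
end

section
/- To convert the pair (1, n), for a positive integer n, to (±1, 0) or (0, ±1) by successively adding one entry to or subtracting one entry from the other, requires exactly n steps. -/
/-- One step: add one entry of the pair to, or subtract it from, the other entry. -/
def Step2 (a b : ℤ × ℤ) : Prop :=
  b = (a.1 + a.2, a.2) ∨ b = (a.1 - a.2, a.2) ∨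
    b = (a.1, a.2 + a.1) ∨ b = (a.1, a.2 - a.1)

/-- The pair is of the form `(±1, 0)` or `(0, ±1)`. -/
def Done (a : ℤ × ℤ) : Prop :=
  (a.2 = 0 ∧ (a.1 = 1 ∨ a.1 = -1)) ∨ (a.1 = 0 ∧ (a.2 = 1 ∨ a.2 = -1))

/-- Number of steps of the subtractive Euclidean algorithm. -/
def G : ℕ → ℕ → ℕ
  | x, y =>
    if x = 0 then 0
    else if y = 0 then 0
    else if x ≤ y then G x (y - x) + 1
    else G (x - y) y + 1
  termination_by x y => x + y
  decreasing_by all_goals omega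

lemma G_def (x y : ℕ) : G x y =
    (if x = 0 then 0
    else if y = 0 then 0
    else if x ≤ y then G x (y - x) + 1
    else G (x - y) y + 1) := by
  rw [G]

@[simp] lemma G_zero_left (y : ℕ) : G 0 y = 0 := by rw [G_def]; simp

@[simp] lemma G_zero_right (x : ℕ) : G x 0 = 0 := by rw [G_def]; split_ifs <;> simp_all

lemma G_symm_aux : ∀ n x y, x + y ≤ n → G x y = G y x := by
  intro n
  induction n with
  | zero =>
    intro x y h
    have hx : x = 0 := by omega
    have hy : y = 0 := by omega
    subst hx; subst hy; rfl
  | succ n ih =>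
    intro x y h
    rcases Nat.eq_zero_or_pos x with hx | hx
    · subst hx; simp
    rcases Nat.eq_zero_or_pos y with hy | hy
    · subst hy; simp
    rcases lt_trichotomy x y with hxy | hxy | hxy
    · rw [G_def x y, G_def y x]
      have h1 : ¬ x = 0 := by omega
      have h2 : ¬ y = 0 := by omega
      have h3 : x ≤ y := by omega
      have h4 : ¬ y ≤ x := by omega
      simp only [h1, h2, h3, h4, if_false, if_true]
      rw [ih x (y - x) (by omega)]
    · subst hxy
      rfl
    · rw [G_def x y, G_def y x]
      have h1 : ¬ x = 0 := by omega
      have h2 : ¬ y = 0 := by omega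
      have h3 : ¬ x ≤ y := by omega
      have h4 : y ≤ x := by omega
      simp only [h1, h2, h3, h4, if_false, if_true]
      rw [ih (x - y) y (by omega)]

lemma G_symm (x y : ℕ) : G x y = G y x := G_symm_aux (x + y) x y le_rfl

lemma G_one (n : ℕ) : G 1 n = n := by
  induction n with
  | zero => simp
  | succ n ih =>
    rw [G_def]
    have h1 : ¬ (1:ℕ) = 0 := by omega
    have h2 : ¬ n + 1 = 0 := by omega
    have h3 : 1 ≤ n + 1 := by omega
    simp only [h1, h2, h3, if_false, if_true]
    simpa using ih

lemma G_sub_le (x y : ℕ) (h : x ≤ y) : G x y ≤ G x (y - x) + 1 := by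
  rw [G_def x y]
  split_ifs <;> omega

lemma G_sub_le' (x y : ℕ) (h : y < x) : G x y ≤ G x (x - y) + 1 := by
  rcases Nat.eq_zero_or_pos y with hy | hy
  · subst hy; simp
  have hL : G x y = G (x - y) y + 1 := by
    rw [G_def x y]; split_ifs <;> omega
  have hR : G x (x - y) = G y (x - y) + 1 := by
    rw [G_def x (x - y)]
    have h1 : ¬ x = 0 := by omega
    have h2 : ¬ x - y = 0 := by omega
    have h3 : ¬ x ≤ x - y := by omega
    simp only [h1, h2, h3, if_false]
    congr 2
    omega
  rw [hL, hR, G_symm y (x - y)]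
  omega

lemma G_add_le (x y : ℕ) : G x y ≤ G x (x + y) + 1 := by
  rcases Nat.eq_zero_or_pos x with hx | hx
  · subst hx; simp
  have hR : G x (x + y) = G x y + 1 := by
    rw [G_def x (x + y)]
    have h1 : ¬ x = 0 := by omega
    have h2 : ¬ x + y = 0 := by omega
    have h3 : x ≤ x + y := by omega
    simp only [h1, h2, h3, if_false, if_true]
    congr 2
    omega
  omega

lemma G_abs_le (x y v : ℕ)
    (h : v = x + y ∨ (v = y - x ∧ x ≤ y) ∨ (v = x - y ∧ y ≤ x)) :
    G x y ≤ G x v + 1 := by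
  rcases h with h | ⟨h, hxy⟩ | ⟨h, hyx⟩
  · subst h; exact G_add_le x y
  · subst h; exact G_sub_le x y hxy
  · subst h
    rcases lt_or_eq_of_le hyx with hlt | heq
    · exact G_sub_le' x y hlt
    · have := G_sub_le x y (by omega)
      have e : y - x = x - y := by omega
      rwa [e] at this

lemma step_le {p q : ℤ × ℤ} (h : Step2 p q) :
    G p.1.natAbs p.2.natAbs ≤ G q.1.natAbs q.2.natAbs + 1 := by
  obtain ⟨a, b⟩ := p
  rcases h with h | h | h | h <;> subst h <;> simp only []
  · rw [G_symm a.natAbs b.natAbs, G_symm (a+b).natAbs b.natAbs]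
    exact G_abs_le b.natAbs a.natAbs (a+b).natAbs (by omega)
  · rw [G_symm a.natAbs b.natAbs, G_symm (a-b).natAbs b.natAbs]
    exact G_abs_le b.natAbs a.natAbs (a-b).natAbs (by omega)
  · exact G_abs_le a.natAbs b.natAbs (b+a).natAbs (by omega)
  · exact G_abs_le a.natAbs b.natAbs (b-a).natAbs (by omega)

lemma path_bound : ∀ (k : ℕ) (f : ℕ → ℤ × ℤ),
    (∀ i < k, Step2 (f i) (f (i + 1))) → Done (f k) →
    G (f 0).1.natAbs (f 0).2.natAbs ≤ k := by
  intro k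
  induction k with
  | zero =>
    intro f _ hd
    rcases hd with ⟨h2, h1 | h1⟩ | ⟨h1, h2 | h2⟩ <;> simp [h1, h2]
  | succ k ih =>
    intro f hs hd
    have h1 := ih (fun i => f (i + 1)) (fun i hi => hs (i + 1) (by omega)) hd
    have h0 := step_le (hs 0 (by omega))
    omega

/-- Converting `(1, n)` (for `n ≥ 1`) to `(±1, 0)` or `(0, ±1)` by successively adding one
entry to or subtracting one entry from the other requires exactly `n` steps: it can be done
in `n` steps, and any such sequence of steps has length at least `n`. -/
theorem pair_reduction_takes_n_steps (n : ℕ) (hn : 0 < n) :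
    (∃ f : ℕ → ℤ × ℤ, f 0 = (1, (n : ℤ)) ∧ (∀ i < n, Step2 (f i) (f (i + 1))) ∧
        Done (f n)) ∧
    ∀ (k : ℕ) (f : ℕ → ℤ × ℤ), f 0 = (1, (n : ℤ)) → (∀ i < k, Step2 (f i) (f (i + 1))) →
      Done (f k) → n ≤ k := by
  constructor
  · refine ⟨fun i => (1, (n : ℤ) - i), by simp, fun i hi => ?_, ?_⟩
    · right; right; right
      have : ((i + 1 : ℕ) : ℤ) = (i : ℤ) + 1 := by push_cast; ring
      simp only [this]
      apply Prod.ext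
      · rfl
      · simp only []
        ring
    · left
      refine ⟨by simp, Or.inl rfl⟩
  · intro k f h0 hs hd
    have := path_bound k f hs hd
    rw [h0] at this
    simp only [Int.natAbs_one, Int.natAbs_natCast] at this
    rwa [G_one] at this
end

section
/- The word length of e_{21}^n in SL_2(ℤ) with respect to the generating set {e_{12}^{±1}, e_{21}^{±1}} equals n for every positive integer n. -/
open Matrix

/-- The elementary matrix `e_{12} = [[1,1],[0,1]]` in `SL_2(ℤ)`. -/
def e12 : Matrix.SpecialLinearGroup (Fin 2) ℤ :=
  ⟨!![1, 1; 0, 1], by simp [Matrix.det_fin_two_of]⟩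

/-- The elementary matrix `e_{21} = [[1,0],[1,1]]` in `SL_2(ℤ)`. -/
def e21 : Matrix.SpecialLinearGroup (Fin 2) ℤ :=
  ⟨!![1, 0; 1, 1], by simp [Matrix.det_fin_two_of]⟩

namespace WordLenAux

/-- Sum of the partial quotients of the continued fraction of `c/d`. -/
def S : ℕ → ℕ → ℕ
  | _, 0 => 0
  | c, (d+1) => c / (d+1) + S (d+1) (c % (d+1))
termination_by c d => d
decreasing_by exact Nat.mod_lt _ (Nat.succ_pos _)

lemma S_zero (c : ℕ) : S c 0 = 0 := by rw [S]

lemma S_def {d : ℕ} (hd : 0 < d) (c : ℕ) : S c d = c / d + S d (c % d) := by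
  obtain ⟨e, rfl⟩ : ∃ e, d = e + 1 := ⟨d - 1, by omega⟩
  rw [S]

lemma S_zero_left (d : ℕ) : S 0 d = 0 := by
  rcases Nat.eq_zero_or_pos d with h | h
  · rw [h, S_zero]
  · rw [S_def h, Nat.zero_div, Nat.zero_mod, S_zero]

lemma S_one (n : ℕ) : S n 1 = n := by
  rw [S_def Nat.one_pos, Nat.div_one, Nat.mod_one, S_zero]
  omega

lemma S_self {b : ℕ} (hb : 0 < b) : S b b = 1 := by
  rw [S_def hb, Nat.div_self hb, Nat.mod_self, S_zero]

lemma S_add {d : ℕ} (hd : 0 < d) (c : ℕ) : S (c + d) d = S c d + 1 := by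
  rw [S_def hd, S_def hd, Nat.add_div_right _ hd, Nat.add_mod_right]
  omega

lemma S_swap {c d : ℕ} (hc : 0 < c) (hd : 0 < d) : S c d = S d c := by
  rcases lt_trichotomy c d with h | h | h
  · rw [S_def hd c, Nat.div_eq_of_lt h, Nat.mod_eq_of_lt h, Nat.zero_add]
  · rw [h]
  · rw [S_def hc d, Nat.div_eq_of_lt h, Nat.mod_eq_of_lt h, Nat.zero_add]

lemma S_aux {c d : ℕ} (hc : 0 < c) (h : 2 * c < d) : S d (d - c) = S d c := by
  set m := d - c with hm
  have hm0 : 0 < m := by omega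
  have h2 : c < m := by omega
  have e1 : d = c + m := by omega
  have hdiv : d / m = 1 := by
    rw [e1, Nat.add_div_right _ hm0, Nat.div_eq_of_lt h2]
  have hmod : d % m = c := by
    rw [e1, Nat.add_mod_right, Nat.mod_eq_of_lt h2]
  have hd2 : d / c = m / c + 1 := by
    rw [e1, Nat.add_comm c m, Nat.add_div_right _ hc]
  have hd3 : d % c = m % c := by
    rw [e1, Nat.add_comm c m, Nat.add_mod_right]
  rw [S_def hm0 d, S_def hc d, hdiv, hmod, hd2, hd3, S_def hc m]
  omega

lemma S_sub {c d : ℕ} (hc : 0 < c) (h : c < d) : S (d - c) d = S c d := by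
  have hd : 0 < d := lt_trans hc h
  have h1 : 0 < d - c := by omega
  rw [S_swap h1 hd, S_swap hc hd]
  rcases lt_trichotomy (2 * c) d with hlt | heq | hgt
  · exact S_aux hc hlt
  · have : d - c = c := by omega
    rw [this]
  · have hlt2 : 2 * (d - c) < d := by omega
    have h3 := S_aux h1 hlt2
    have h4 : d - (d - c) = c := by omega
    rw [h4] at h3
    exact h3.symm

/-- The potential function on integer pairs. -/
def P (c d : ℤ) : ℕ := S c.natAbs d.natAbs

lemma keyA (c d : ℤ) : P (c + d) d ≤ P c d + 1 := by
  unfold P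
  set a := c.natAbs with ha
  set b := d.natAbs with hb
  rcases Nat.eq_zero_or_pos b with hb0 | hb0
  · have hd : d = 0 := by omega
    subst hd
    simp
    exact Nat.le_succ _
  have habs : (c + d).natAbs = a + b ∨ (c + d).natAbs = a - b ∨ (c + d).natAbs = b - a := by
    omega
  rcases habs with h | h | h <;> rw [h]
  · rw [S_add hb0]
  · rcases le_or_gt b a with hab | hab
    · have e : a - b + b = a := by omega
      have h2 := S_add hb0 (a - b)
      rw [e] at h2
      omega
    · have : a - b = 0 := by omega
      rw [this, S_zero_left]
      omega
  · rcases Nat.eq_zero_or_pos a with ha0 | ha0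
    · rw [ha0, Nat.sub_zero, S_self hb0]
      omega
    · rcases lt_trichotomy a b with hab | hab | hab
      · rw [S_sub ha0 hab]
        omega
      · rw [hab, Nat.sub_self, S_zero_left]
        omega
      · have : b - a = 0 := by omega
        rw [this, S_zero_left]
        omega

lemma keyA' (c d : ℤ) : P (c - d) d ≤ P c d + 1 := by
  have h := keyA c (-d)
  unfold P at h ⊢
  rw [Int.natAbs_neg] at h
  rw [sub_eq_add_neg]
  exact h

lemma P_swap {c d : ℤ} (hc : c ≠ 0) (hd : d ≠ 0) : P c d = P d c := by
  unfold P
  exact S_swap (Int.natAbs_pos.mpr hc) (Int.natAbs_pos.mpr hd)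

lemma keyB (c d : ℤ) : P c (d + c) ≤ P c d + 1 := by
  by_cases hc : c = 0
  · subst hc; simp
  by_cases hdc : d + c = 0
  · rw [hdc]
    unfold P
    simp [S_zero]
  by_cases hd : d = 0
  · subst hd
    unfold P
    simp only [Int.natAbs_zero, S_zero, zero_add]
    rw [S_self (Int.natAbs_pos.mpr hc)]
  calc P c (d + c) = P (d + c) c := P_swap hc hdc
    _ ≤ P d c + 1 := keyA d c
    _ = P c d + 1 := by rw [P_swap hd hc]

lemma keyB' (c d : ℤ) : P c (d - c) ≤ P c d + 1 := by
  have h := keyB (-c) d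
  unfold P at h ⊢
  rw [Int.natAbs_neg] at h
  rw [sub_eq_add_neg] at *
  exact h

/-- The potential of an element of `SL₂(ℤ)`: evaluated on its bottom row. -/
def phi (g : Matrix.SpecialLinearGroup (Fin 2) ℤ) : ℕ :=
  P ((g : Matrix (Fin 2) (Fin 2) ℤ) 1 0) ((g : Matrix (Fin 2) (Fin 2) ℤ) 1 1)

lemma coe_e12 : (e12 : Matrix (Fin 2) (Fin 2) ℤ) = !![1, 1; 0, 1] := rfl
lemma coe_e21 : (e21 : Matrix (Fin 2) (Fin 2) ℤ) = !![1, 0; 1, 1] := rfl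

lemma coe_e12_inv : (e12⁻¹ : Matrix.SpecialLinearGroup (Fin 2) ℤ)
    = (!![1, -1; 0, 1] : Matrix (Fin 2) (Fin 2) ℤ) := by
  rw [Matrix.SpecialLinearGroup.coe_inv, coe_e12, Matrix.adjugate_fin_two_of]
  norm_num

lemma coe_e21_inv : (e21⁻¹ : Matrix.SpecialLinearGroup (Fin 2) ℤ)
    = (!![1, 0; -1, 1] : Matrix (Fin 2) (Fin 2) ℤ) := by
  rw [Matrix.SpecialLinearGroup.coe_inv, coe_e21, Matrix.adjugate_fin_two_of]
  norm_num

lemma step (g x : Matrix.SpecialLinearGroup (Fin 2) ℤ)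
    (hx : x = e12 ∨ x = e12⁻¹ ∨ x = e21 ∨ x = e21⁻¹) :
    phi (g * x) ≤ phi g + 1 := by
  set c := (g : Matrix (Fin 2) (Fin 2) ℤ) 1 0 with hc
  set d := (g : Matrix (Fin 2) (Fin 2) ℤ) 1 1 with hd
  rcases hx with rfl | rfl | rfl | rfl
  · have h0 : ((g * e12 : Matrix.SpecialLinearGroup (Fin 2) ℤ)
        : Matrix (Fin 2) (Fin 2) ℤ) 1 0 = c := by
      rw [Matrix.SpecialLinearGroup.coe_mul, coe_e12]
      simp [Matrix.mul_apply, Fin.sum_univ_two]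
      rfl
    have h1 : ((g * e12 : Matrix.SpecialLinearGroup (Fin 2) ℤ)
        : Matrix (Fin 2) (Fin 2) ℤ) 1 1 = d + c := by
      rw [Matrix.SpecialLinearGroup.coe_mul, coe_e12]
      simp [Matrix.mul_apply, Fin.sum_univ_two]
      ring
    unfold phi
    rw [h0, h1, ← hc, ← hd]
    exact keyB c d
  · have h0 : ((g * e12⁻¹ : Matrix.SpecialLinearGroup (Fin 2) ℤ)
        : Matrix (Fin 2) (Fin 2) ℤ) 1 0 = c := by
      rw [Matrix.SpecialLinearGroup.coe_mul, coe_e12_inv]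
      simp [Matrix.mul_apply, Fin.sum_univ_two]
      rfl
    have h1 : ((g * e12⁻¹ : Matrix.SpecialLinearGroup (Fin 2) ℤ)
        : Matrix (Fin 2) (Fin 2) ℤ) 1 1 = d - c := by
      rw [Matrix.SpecialLinearGroup.coe_mul, coe_e12_inv]
      simp [Matrix.mul_apply, Fin.sum_univ_two]
      ring
    unfold phi
    rw [h0, h1, ← hc, ← hd]
    exact keyB' c d
  · have h0 : ((g * e21 : Matrix.SpecialLinearGroup (Fin 2) ℤ)
        : Matrix (Fin 2) (Fin 2) ℤ) 1 0 = c + d := by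
      rw [Matrix.SpecialLinearGroup.coe_mul, coe_e21]
      simp [Matrix.mul_apply, Fin.sum_univ_two]
      rfl
    have h1 : ((g * e21 : Matrix.SpecialLinearGroup (Fin 2) ℤ)
        : Matrix (Fin 2) (Fin 2) ℤ) 1 1 = d := by
      rw [Matrix.SpecialLinearGroup.coe_mul, coe_e21]
      simp [Matrix.mul_apply, Fin.sum_univ_two]
      rfl
    unfold phi
    rw [h0, h1, ← hc, ← hd]
    exact keyA c d
  · have h0 : ((g * e21⁻¹ : Matrix.SpecialLinearGroup (Fin 2) ℤ)
        : Matrix (Fin 2) (Fin 2) ℤ) 1 0 = c - d := by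
      rw [Matrix.SpecialLinearGroup.coe_mul, coe_e21_inv]
      simp [Matrix.mul_apply, Fin.sum_univ_two]
      ring
    have h1 : ((g * e21⁻¹ : Matrix.SpecialLinearGroup (Fin 2) ℤ)
        : Matrix (Fin 2) (Fin 2) ℤ) 1 1 = d := by
      rw [Matrix.SpecialLinearGroup.coe_mul, coe_e21_inv]
      simp [Matrix.mul_apply, Fin.sum_univ_two]
      rfl
    unfold phi
    rw [h0, h1, ← hc, ← hd]
    exact keyA' c d

lemma lower (l : List (Matrix.SpecialLinearGroup (Fin 2) ℤ))
    (hl : ∀ x ∈ l, x = e12 ∨ x = e12⁻¹ ∨ x = e21 ∨ x = e21⁻¹) :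
    phi l.prod ≤ l.length := by
  induction l using List.reverseRecOn with
  | nil =>
    unfold phi P
    simp [Matrix.SpecialLinearGroup.coe_one, Matrix.one_fin_two, S_zero_left]
  | append_singleton l x ih =>
    rw [List.prod_append, List.prod_singleton, List.length_append]
    have h1 := step l.prod x (hl x (by simp))
    have h2 := ih (fun y hy => hl y (by simp [hy]))
    simp only [List.length_singleton]
    omega

lemma coe_e21_pow (n : ℕ) :
    ((e21 ^ n : Matrix.SpecialLinearGroup (Fin 2) ℤ) : Matrix (Fin 2) (Fin 2) ℤ)
      = !![1, 0; (n : ℤ), 1] := by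
  induction n with
  | zero => simp [Matrix.SpecialLinearGroup.coe_one, Matrix.one_fin_two]
  | succ n ih =>
    rw [pow_succ, Matrix.SpecialLinearGroup.coe_mul, ih, coe_e21, Matrix.mul_fin_two]
    norm_num

lemma phi_e21_pow (n : ℕ) : phi (e21 ^ n) = n := by
  unfold phi P
  rw [coe_e21_pow]
  simp [S_one]

end WordLenAux

/-- The word length of `e_{21}^n` in `SL_2(ℤ)` with respect to `{e_{12}^{±1}, e_{21}^{±1}}`
equals `n` for every positive integer `n`: there is a word of length `n` representing it,
and every representing word has length at least `n`. -/
theorem word_length_e21_pow (n : ℕ) (hn : 0 < n) :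
    (∃ l : List (Matrix.SpecialLinearGroup (Fin 2) ℤ),
        (∀ x ∈ l, x = e12 ∨ x = e12⁻¹ ∨ x = e21 ∨ x = e21⁻¹) ∧
        l.prod = e21 ^ n ∧ l.length = n) ∧
    ∀ l : List (Matrix.SpecialLinearGroup (Fin 2) ℤ),
      (∀ x ∈ l, x = e12 ∨ x = e12⁻¹ ∨ x = e21 ∨ x = e21⁻¹) →
      l.prod = e21 ^ n → n ≤ l.length := by
  constructor
  · refine ⟨List.replicate n e21, ?_, ?_, ?_⟩
    · intro x hx
      have := List.eq_of_mem_replicate hx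
      exact Or.inr (Or.inr (Or.inl this))
    · rw [List.prod_replicate]
    · exact List.length_replicate
  · intro l hl hprod
    have h1 := WordLenAux.lower l hl
    rw [hprod, WordLenAux.phi_e21_pow] at h1
    exact h1
end

section
/- If a matrix M ∈ SL_N(ℤ) is a product of n matrices each belonging to {e_{ij}^{±1} : i ≠ j}, then the sup-norm ‖M‖ (the maximum absolute value of its entries) is at most F_{n+1}, the (n+1)-st Fibonacci number. Consequently there is a constant C_1 > 0, independent of N, with C_1·log‖M‖ ≤ ℓ(M) for all M ∈ SL_N(ℤ), where ℓ is the word length with respect to {e_{ij} : i ≠ j}. -/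
open Matrix

/-- `x` is an elementary matrix `e_{pq}^{±1}` of `SL_N(ℤ)` (`p ≠ q`). -/
def IsElem (N : ℕ) (x : Matrix (Fin N) (Fin N) ℤ) : Prop :=
  ∃ p q : Fin N, p ≠ q ∧ (x = 1 + Matrix.single p q 1 ∨ x = 1 - Matrix.single p q 1)

/-- The sup-norm of an integer matrix: the maximum absolute value of its entries. -/
def supNorm {N : ℕ} (M : Matrix (Fin N) (Fin N) ℤ) : ℕ :=
  Finset.univ.sup fun p : Fin N × Fin N => (M p.1 p.2).natAbs

lemma fib_le_two_pow : ∀ n, Nat.fib (n + 1) ≤ 2 ^ n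
  | 0 => by simp
  | 1 => by simp [Nat.fib]
  | (n + 2) => by
    have h1 := fib_le_two_pow n
    have h2 := fib_le_two_pow (n + 1)
    have h3 : Nat.fib (n + 2 + 1) = Nat.fib (n + 1) + Nat.fib (n + 2) := by
      rw [show n + 2 + 1 = (n + 1) + 2 from rfl, Nat.fib_add_two]
    rw [show n + 1 + 1 = n + 2 from rfl] at h2
    have h4 : (2 : ℕ) ^ (n + 2) = 2 * 2 ^ (n + 1) := by ring
    have h5 : (2 : ℕ) ^ (n + 1) = 2 * 2 ^ n := by ring
    omega

lemma key_lemma (N : ℕ) (l : List (Matrix (Fin N) (Fin N) ℤ)) (hl : ∀ x ∈ l, IsElem N x) :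
    (∀ i j, (l.prod i j).natAbs ≤ Nat.fib (l.length + 1)) ∧
    (∀ i i' j, i ≠ i' →
      (l.prod i j).natAbs + (l.prod i' j).natAbs ≤ Nat.fib (l.length + 2)) := by
  induction l with
  | nil =>
    constructor
    · intro i j
      simp only [List.prod_nil, Matrix.one_apply]
      split <;> simp
    · intro i i' j hii
      simp only [List.prod_nil, List.length_nil, Matrix.one_apply]
      by_cases h : i = j
      · rw [if_pos h, if_neg (by rintro rfl; exact hii h)]; simp
      · rw [if_neg h]; split <;> simp
  | cons x t ih =>
    obtain ⟨hent, hpair⟩ := ih (fun y hy => hl y (List.mem_cons_of_mem x hy))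
    obtain ⟨p, q, hpq, hx⟩ := hl x (List.mem_cons_self)
    set A := t.prod with hA
    set n := t.length with hn
    have hprod : (x :: t).prod = x * A := List.prod_cons
    -- entry formula
    have hform : ∀ i j, ((x * A) i j).natAbs ≤
        if i = p then (A i j).natAbs + (A q j).natAbs else (A i j).natAbs := by
      intro i j
      rcases hx with rfl | rfl
      · rw [add_mul, one_mul]
        by_cases hip : i = p
        · rw [if_pos hip, hip]
          simp only [Matrix.add_apply, single_mul_apply_same, one_mul]
          exact Int.natAbs_add_le _ _
        · rw [if_neg hip]
          rw [Matrix.add_apply, single_mul_apply_of_ne 1 p q i j hip A,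
            add_zero]
      · rw [sub_mul, one_mul]
        by_cases hip : i = p
        · rw [if_pos hip, hip]
          simp only [Matrix.sub_apply, single_mul_apply_same, one_mul]
          exact Int.natAbs_sub_le _ _
        · rw [if_neg hip]
          rw [Matrix.sub_apply, single_mul_apply_of_ne 1 p q i j hip A,
            sub_zero]
    have hfib1 : Nat.fib (n + 2) = Nat.fib (n + 1) + Nat.fib n := by
      rw [Nat.fib_add_two]; omega
    have hfib2 : Nat.fib (n + 3) = Nat.fib (n + 2) + Nat.fib (n + 1) := by
      rw [show n + 3 = (n + 1) + 2 from rfl, Nat.fib_add_two]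
      rw [show n + 1 + 1 = n + 2 from rfl]; omega
    have hfib3 : Nat.fib n ≤ Nat.fib (n + 1) := Nat.fib_le_fib_succ
    have hlen : (x :: t).length = n + 1 := by simp [hn]
    rw [hprod, hlen, show n + 1 + 1 = n + 2 from rfl, show n + 1 + 2 = n + 3 from rfl]
    constructor
    · intro i j
      have h1 := hform i j
      by_cases hip : i = p
      · rw [if_pos hip] at h1
        rw [hip] at h1 ⊢
        have h2 := hpair p q j hpq
        omega
      · rw [if_neg hip] at h1
        have h2 := hent i j
        omega
    · intro i i' j hii
      have h1 := hform i j
      have h2 := hform i' j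
      by_cases hip : i = p <;> by_cases hip' : i' = p
      · exact absurd (hip.trans hip'.symm) hii
      · rw [if_pos hip, hip] at h1
        rw [if_neg hip'] at h2
        by_cases hiq : i' = q
        · rw [hiq] at h2 ⊢
          have h3 := hpair p q j hpq
          have h4 := hent q j
          rw [hip]
          omega
        · have h3 := hpair p q j hpq
          have h4 := hpair p i' j (fun h => hip' (h.symm ▸ rfl))
          have h5 := hpair q i' j (fun h => hiq (h.symm ▸ rfl))
          rw [hip]
          omega
      · rw [if_neg hip] at h1
        rw [if_pos hip', hip'] at h2
        by_cases hiq : i = q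
        · rw [hiq] at h1 ⊢
          have h3 := hpair p q j hpq
          have h4 := hent q j
          rw [hip']
          omega
        · have h3 := hpair p q j hpq
          have h4 := hpair p i j (fun h => hip (h.symm ▸ rfl))
          have h5 := hpair q i j (fun h => hiq (h.symm ▸ rfl))
          rw [hip']
          omega
      · rw [if_neg hip] at h1
        rw [if_neg hip'] at h2
        have h3 := hpair i i' j hii
        omega

/-- A product of `n` elementary matrices `e_{ij}^{±1}` has sup-norm at most `F_{n+1}`.
Consequently there is a constant `C₁ > 0`, independent of `N`, such that
`C₁·log‖M‖ ≤ ℓ(M)`, i.e. every word in the generators representing `M` has length at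
least `C₁·log‖M‖`. -/
theorem norm_growth_and_lower_bound :
    (∀ (N : ℕ) (l : List (Matrix (Fin N) (Fin N) ℤ)), (∀ x ∈ l, IsElem N x) →
        supNorm l.prod ≤ Nat.fib (l.length + 1)) ∧
    ∃ C₁ : ℝ, 0 < C₁ ∧
      ∀ (N : ℕ) (l : List (Matrix (Fin N) (Fin N) ℤ)), (∀ x ∈ l, IsElem N x) →
        C₁ * Real.log (supNorm l.prod) ≤ (l.length : ℝ) := by
  have main : ∀ (N : ℕ) (l : List (Matrix (Fin N) (Fin N) ℤ)), (∀ x ∈ l, IsElem N x) →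
      supNorm l.prod ≤ Nat.fib (l.length + 1) := by
    intro N l hl
    apply Finset.sup_le
    intro ⟨i, j⟩ _
    exact (key_lemma N l hl).1 i j
  refine ⟨main, (Real.log 2)⁻¹, by positivity, ?_⟩
  intro N l hl
  have h1 : supNorm l.prod ≤ 2 ^ l.length := (main N l hl).trans (fib_le_two_pow _)
  have hlog : Real.log (supNorm l.prod) ≤ l.length * Real.log 2 := by
    rcases Nat.eq_zero_or_pos (supNorm l.prod) with h | h
    · rw [h]; simp; positivity
    · calc Real.log (supNorm l.prod) ≤ Real.log (2 ^ l.length) := by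
            apply Real.log_le_log (by exact_mod_cast h)
            exact_mod_cast h1
        _ = l.length * Real.log 2 := by rw [Real.log_pow]
  rw [inv_mul_le_iff₀ (by positivity)]
  linarith [hlog]
end

section
/- For every N ≥ 3 and all 1 ≤ i, j ≤ N with i ≠ j, the elementary matrix e_{ij} ∈ SL_N(ℤ) can be expressed as a word of length at most 10N in the matrices A^{±1} and B^{±1}, where A = I + E_{12} and B has 1's in entries (i,i+1) for 1 ≤ i ≤ N−1, (−1)^{N−1} in entry (N,1), and 0 elsewhere. -/
open Matrix

/-- The matrix `A = I + E_{12} ∈ SL_N(ℤ)` (the elementary matrix `e_{12}`), `N = n+3`. -/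
def Amat (n : ℕ) : Matrix (Fin (n + 3)) (Fin (n + 3)) ℤ :=
  1 + single 0 1 1

/-- The matrix `B ∈ SL_N(ℤ)` with `1`'s in entries `(i,i+1)` for `1 ≤ i ≤ N−1`,
`(−1)^{N−1}` in entry `(N,1)`, and `0` elsewhere; `N = n+3`, 0-indexed. -/
def Bmat (n : ℕ) : Matrix (Fin (n + 3)) (Fin (n + 3)) ℤ :=
  Matrix.of fun i j =>
    if j = i + 1 then (if (i : ℕ) = n + 2 then (-1 : ℤ) ^ (n + 2) else 1) else 0

open Fin.CommRing

namespace EW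

variable {n : ℕ}

/-- sign in row `i` of `B`. -/
def eps (n : ℕ) (i : Fin (n + 3)) : ℤ :=
  if (i : ℕ) = n + 2 then (-1 : ℤ) ^ (n + 2) else 1

lemma eps_unit (i : Fin (n + 3)) : eps n i = 1 ∨ eps n i = -1 := by
  unfold eps
  split_ifs
  · rcases Nat.even_or_odd (n + 2) with h | h
    · left; exact h.neg_one_pow
    · right; exact h.neg_one_pow
  · left; rfl

lemma eps_mul_self (i : Fin (n + 3)) : eps n i * eps n i = 1 := by
  rcases eps_unit (n := n) i with h | h <;> rw [h] <;> ring

lemma Bmat_apply (i j : Fin (n + 3)) :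
    Bmat n i j = if j = i + 1 then eps n i else 0 := rfl

/-- explicit inverse of `B`. -/
def Bv (n : ℕ) : Matrix (Fin (n + 3)) (Fin (n + 3)) ℤ :=
  Matrix.of fun i j => if i = j + 1 then eps n j else 0

lemma B_mul_apply (M : Matrix (Fin (n + 3)) (Fin (n + 3)) ℤ) (a b : Fin (n + 3)) :
    (Bmat n * M) a b = eps n a * M (a + 1) b := by
  rw [Matrix.mul_apply]
  rw [Finset.sum_eq_single (a + 1)]
  · rw [Bmat_apply, if_pos rfl]
  · intro k _ hk
    rw [Bmat_apply, if_neg hk, zero_mul]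
  · intro h; exact absurd (Finset.mem_univ _) h

lemma mul_Bv_apply (M : Matrix (Fin (n + 3)) (Fin (n + 3)) ℤ) (a b : Fin (n + 3)) :
    (M * Bv n) a b = M a (b + 1) * eps n b := by
  rw [Matrix.mul_apply]
  rw [Finset.sum_eq_single (b + 1)]
  · rw [Bv, Matrix.of_apply, if_pos rfl]
  · intro k _ hk
    rw [Bv, Matrix.of_apply, if_neg hk, mul_zero]
  · intro h; exact absurd (Finset.mem_univ _) h

lemma Bv_mul_apply (M : Matrix (Fin (n + 3)) (Fin (n + 3)) ℤ) (a b : Fin (n + 3)) :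
    (Bv n * M) a b = eps n (a - 1) * M (a - 1) b := by
  rw [Matrix.mul_apply]
  rw [Finset.sum_eq_single (a - 1)]
  · rw [Bv, Matrix.of_apply, if_pos (by ring)]
  · intro k _ hk
    rw [Bv, Matrix.of_apply, if_neg, zero_mul]
    intro h
    exact hk (by rw [h]; ring)
  · intro h; exact absurd (Finset.mem_univ _) h

lemma mul_B_apply (M : Matrix (Fin (n + 3)) (Fin (n + 3)) ℤ) (a b : Fin (n + 3)) :
    (M * Bmat n) a b = M a (b - 1) * eps n (b - 1) := by
  rw [Matrix.mul_apply]
  rw [Finset.sum_eq_single (b - 1)]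
  · rw [Bmat_apply, if_pos (by ring)]
  · intro k _ hk
    rw [Bmat_apply, if_neg, mul_zero]
    intro h
    exact hk (by rw [h]; ring)
  · intro h; exact absurd (Finset.mem_univ _) h

lemma B_mul_Bv : Bmat n * Bv n = 1 := by
  ext a b
  rw [B_mul_apply, Bv, Matrix.of_apply]
  rcases eq_or_ne a b with h | h
  · subst h
    rw [if_pos rfl, eps_mul_self, Matrix.one_apply_eq]
  · rw [if_neg (fun hh => h (by exact add_right_cancel hh)), mul_zero,
      Matrix.one_apply_ne h]

lemma Binv_eq : (Bmat n)⁻¹ = Bv n := Matrix.inv_eq_right_inv B_mul_Bv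

lemma conj1_apply (M : Matrix (Fin (n + 3)) (Fin (n + 3)) ℤ) (a b : Fin (n + 3)) :
    (Bmat n * M * Bv n) a b = eps n a * eps n b * M (a + 1) (b + 1) := by
  rw [mul_Bv_apply, B_mul_apply]; ring

lemma conj2_apply (M : Matrix (Fin (n + 3)) (Fin (n + 3)) ℤ) (a b : Fin (n + 3)) :
    (Bv n * M * Bmat n) a b = eps n (a - 1) * eps n (b - 1) * M (a - 1) (b - 1) := by
  rw [mul_B_apply, Bv_mul_apply]; ring



/-! ### Words -/

def Gen (n : ℕ) (x : Matrix (Fin (n + 3)) (Fin (n + 3)) ℤ) : Prop :=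
  x = Amat n ∨ x = (Amat n)⁻¹ ∨ x = Bmat n ∨ x = (Bmat n)⁻¹

def W (n : ℕ) (k : ℕ) (M : Matrix (Fin (n + 3)) (Fin (n + 3)) ℤ) : Prop :=
  ∃ l : List (Matrix (Fin (n + 3)) (Fin (n + 3)) ℤ),
    (∀ x ∈ l, Gen n x) ∧ l.prod = M ∧ l.length ≤ k

lemma W.mul {k k' : ℕ} {M M'} (h : W n k M) (h' : W n k' M') :
    W n (k + k') (M * M') := by
  obtain ⟨l, hg, hp, hl⟩ := h
  obtain ⟨l', hg', hp', hl'⟩ := h'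
  exact ⟨l ++ l', by
    intro x hx
    rcases List.mem_append.mp hx with h | h
    exacts [hg x h, hg' x h], by rw [List.prod_append, hp, hp'],
    by rw [List.length_append]; omega⟩

lemma W.mono {k k' : ℕ} {M} (h : W n k M) (hk : k ≤ k') : W n k' M := by
  obtain ⟨l, hg, hp, hl⟩ := h
  exact ⟨l, hg, hp, hl.trans hk⟩

lemma W_gen {x} (h : Gen n x) : W n 1 x :=
  ⟨[x], by simpa using h, by simp, by simp⟩

lemma Gen_Bv : Gen n (Bv n) := by
  right; right; right; rw [Binv_eq]

lemma W_conj1 {k M} (h : W n k M) : W n (k + 2) (Bmat n * M * Bv n) := by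
  have := ((W_gen (n := n) (Or.inr (Or.inr (Or.inl rfl)))).mul h).mul (W_gen Gen_Bv)
  exact this.mono (by omega)

lemma W_conj2 {k M} (h : W n k M) : W n (k + 2) (Bv n * M * Bmat n) := by
  have := ((W_gen (n := n) Gen_Bv).mul h).mul
    (W_gen (n := n) (Or.inr (Or.inr (Or.inl rfl))))
  exact this.mono (by omega)

lemma one_ne_zero_fin : (1 : Fin (n + 3)) ≠ 0 := by
  intro h
  have := congrArg Fin.val h
  simp [Fin.val_one, Fin.val_zero] at this

lemma Amat_inv : (Amat n)⁻¹ = 1 + single 0 1 (-1 : ℤ) := by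
  apply Matrix.inv_eq_right_inv
  have h0 : single (0 : Fin (n+3)) (1 : Fin (n+3)) (1:ℤ) *
      single (0 : Fin (n+3)) (1 : Fin (n+3)) (-1 : ℤ) = 0 :=
    Matrix.single_mul_single_of_ne (h := one_ne_zero_fin) ..
  rw [Amat, add_mul, one_mul, mul_add, mul_one, h0, add_zero, add_assoc,
    ← single_add]
  norm_num

lemma W_A (c : ℤ) (hc : c = 1 ∨ c = -1) :
    W n 1 (1 + single 0 1 c) := by
  rcases hc with h | h <;> subst h
  · exact W_gen (Or.inl rfl)
  · exact W_gen (Or.inr (Or.inl (by rw [Amat_inv])))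

/-! ### Fin cast helpers -/

lemma natCast_inj_fin {a b : ℕ} (ha : a < n + 3) (hb : b < n + 3)
    (h : (a : Fin (n + 3)) = b) : a = b := by
  have := congrArg Fin.val h
  rwa [Fin.val_natCast, Fin.val_natCast, Nat.mod_eq_of_lt ha, Nat.mod_eq_of_lt hb] at this

lemma natCast_ne_zero_fin {a : ℕ} (h0 : 0 < a) (h : a < n + 3) :
    (a : Fin (n + 3)) ≠ 0 := by
  intro hh
  have := congrArg Fin.val hh
  rw [Fin.val_natCast, Nat.mod_eq_of_lt h, Fin.val_zero] at this
  omega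

/-! ### units -/

def UnitF (u : ℕ → ℤ) : Prop := ∀ r, u r = 1 ∨ u r = -1

lemma unit_mul {a b : ℤ} (ha : a = 1 ∨ a = -1) (hb : b = 1 ∨ b = -1) :
    a * b = 1 ∨ a * b = -1 := by
  rcases ha with h | h <;> rcases hb with h' | h' <;> simp [h, h']

lemma unit_sq {a : ℤ} (ha : a = 1 ∨ a = -1) : a * a = 1 := by
  rcases ha with h | h <;> simp [h]

lemma unit_neg {a : ℤ} (ha : a = 1 ∨ a = -1) : -a = 1 ∨ -a = -1 := by
  rcases ha with h | h <;> simp [h]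

/-! ### fans -/

def fanVec (n : ℕ) (p : Fin (n + 3)) (t : ℕ) (u : ℕ → ℤ) : Fin (n + 3) → ℤ :=
  fun b => ∑ r ∈ Finset.range t, if b = p + 1 + (r : Fin (n + 3)) then u r else 0

def fanMat (n : ℕ) (p : Fin (n + 3)) (t : ℕ) (u : ℕ → ℤ) :
    Matrix (Fin (n + 3)) (Fin (n + 3)) ℤ :=
  1 + Matrix.of (fun a b => if a = p then fanVec n p t u b else 0)

lemma fanMat_congr {p : Fin (n + 3)} {t : ℕ} {u u' : ℕ → ℤ}
    (h : ∀ r < t, u r = u' r) : fanMat n p t u = fanMat n p t u' := by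
  have hv : fanVec n p t u = fanVec n p t u' := by
    funext b
    exact Finset.sum_congr rfl fun r hr => by rw [h r (Finset.mem_range.mp hr)]
  rw [fanMat, fanMat, hv]

lemma fanMat_one (p : Fin (n + 3)) (u : ℕ → ℤ) :
    fanMat n p 1 u = 1 + single p (p + 1) (u 0) := by
  rw [fanMat]
  congr 1
  ext a b
  rw [Matrix.of_apply, fanVec, Finset.sum_range_one, single, Matrix.of_apply]
  rw [show p + 1 + ((0 : ℕ) : Fin (n + 3)) = p + 1 by push_cast; ring]
  by_cases ha : a = p
  · by_cases hb : b = p + 1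
    · rw [if_pos ha, if_pos hb, if_pos ⟨ha.symm, hb.symm⟩]
    · rw [if_pos ha, if_neg hb, if_neg (fun h => hb h.2.symm)]
  · rw [if_neg ha, if_neg (fun h => ha h.1.symm)]

lemma fan_conj1 (p : Fin (n + 3)) (t : ℕ) (u : ℕ → ℤ) :
    Bmat n * fanMat n p t u * Bv n =
      fanMat n (p - 1) t (fun r => eps n (p - 1) * eps n (p + (r : Fin (n + 3))) * u r) := by
  ext a b
  rw [conj1_apply]
  simp only [fanMat, Matrix.add_apply, Matrix.of_apply]
  rw [mul_add]
  congr 1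
  · rcases eq_or_ne a b with h | h
    · subst h
      rw [Matrix.one_apply_eq, Matrix.one_apply_eq, mul_one, eps_mul_self]
    · rw [Matrix.one_apply_ne h, Matrix.one_apply_ne (fun hh => h (add_right_cancel hh)),
        mul_zero]
  · by_cases ha : a + 1 = p
    · rw [if_pos ha, if_pos (show a = p - 1 by rw [← ha]; ring)]
      have ha' : a = p - 1 := by rw [← ha]; ring
      rw [fanVec, fanVec, Finset.mul_sum]
      refine Finset.sum_congr rfl fun r _ => ?_
      by_cases hb : b + 1 = p + 1 + (r : Fin (n + 3))
      · have hb' : b = p + (r : Fin (n + 3)) := by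
          have : b + 1 = (p + (r : Fin (n + 3))) + 1 := by rw [hb]; ring
          exact add_right_cancel this
        rw [if_pos hb, if_pos (by rw [hb']; ring), ha', hb']
      · rw [if_neg hb, if_neg (fun hh => hb (by rw [hh]; ring)), mul_zero]
    · rw [if_neg ha, if_neg (fun hh => ha (by rw [hh]; ring)), mul_zero]

lemma fan_conj2 (p : Fin (n + 3)) (t : ℕ) (u : ℕ → ℤ) :
    Bv n * fanMat n p t u * Bmat n =
      fanMat n (p + 1) t (fun r => eps n p * eps n (p + 1 + (r : Fin (n + 3))) * u r) := by
  ext a b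
  rw [conj2_apply]
  simp only [fanMat, Matrix.add_apply, Matrix.of_apply]
  rw [mul_add]
  congr 1
  · rcases eq_or_ne a b with h | h
    · subst h
      rw [Matrix.one_apply_eq, Matrix.one_apply_eq, mul_one, eps_mul_self]
    · rw [Matrix.one_apply_ne h, Matrix.one_apply_ne (fun hh => h (by
        have : a - 1 + 1 = b - 1 + 1 := by rw [hh]
        simpa using this)), mul_zero]
  · by_cases ha : a - 1 = p
    · rw [if_pos ha, if_pos (show a = p + 1 by rw [← ha]; ring)]
      rw [fanVec, fanVec, Finset.mul_sum]
      refine Finset.sum_congr rfl fun r _ => ?_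
      by_cases hb : b - 1 = p + 1 + (r : Fin (n + 3))
      · have hb' : b = p + 1 + 1 + (r : Fin (n + 3)) := by
          have h3 : b - 1 + 1 = p + 1 + (r : Fin (n + 3)) + 1 := by rw [hb]
          rw [sub_add_cancel] at h3
          rw [h3]; ring
        rw [if_pos hb, if_pos hb', ha, hb]
      · rw [if_neg hb, if_neg (fun hh => hb (by rw [hh]; ring)), mul_zero]
    · rw [if_neg ha, if_neg (fun hh => ha (by rw [hh]; ring)), mul_zero]

/-! ### shifting fans -/

lemma fan_shift_up {m t : ℕ} {p : Fin (n + 3)}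
    (h : ∀ u, UnitF u → W n m (fanMat n p t u)) (k : ℕ) :
    ∀ u, UnitF u → W n (m + 2 * k) (fanMat n (p + (k : Fin (n + 3))) t u) := by
  induction k with
  | zero => intro u hu; simpa using h u hu
  | succ k ih =>
      intro u hu
      have hq : p + ((k + 1 : ℕ) : Fin (n + 3)) = (p + (k : Fin (n + 3))) + 1 := by
        push_cast; ring
      set q := p + (k : Fin (n + 3)) with hqdef
      set u0 : ℕ → ℤ := fun r => eps n q * eps n (q + 1 + (r : Fin (n + 3))) * u r with hu0
      have hu0unit : UnitF u0 := fun r =>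
        unit_mul (unit_mul (eps_unit _) (eps_unit _)) (hu r)
      have h1 := W_conj2 (ih u0 hu0unit)
      rw [fan_conj2] at h1
      have he : fanMat n (q + 1) t
          (fun r => eps n q * eps n (q + 1 + (r : Fin (n + 3))) * u0 r) =
          fanMat n (q + 1) t u := by
        refine fanMat_congr fun r _ => ?_
        show eps n q * eps n (q + 1 + (r : Fin (n + 3))) *
            (eps n q * eps n (q + 1 + (r : Fin (n + 3))) * u r) = u r
        have e1 := eps_mul_self (n := n) q
        have e2 := eps_mul_self (n := n) (q + 1 + (r : Fin (n + 3)))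
        linear_combination (eps n (q + 1 + (r : Fin (n + 3))) *
          eps n (q + 1 + (r : Fin (n + 3))) * u r) * e1 + u r * e2
      rw [he] at h1
      rw [hq]
      exact h1.mono (by omega)

lemma fan_shift_down {m t : ℕ} {p : Fin (n + 3)}
    (h : ∀ u, UnitF u → W n m (fanMat n p t u)) (k : ℕ) :
    ∀ u, UnitF u → W n (m + 2 * k) (fanMat n (p - (k : Fin (n + 3))) t u) := by
  induction k with
  | zero => intro u hu; simpa using h u hu
  | succ k ih =>
      intro u hu
      have hq : p - ((k + 1 : ℕ) : Fin (n + 3)) = (p - (k : Fin (n + 3))) - 1 := by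
        push_cast; ring
      set q := p - (k : Fin (n + 3)) with hqdef
      set u0 : ℕ → ℤ := fun r => eps n (q - 1) * eps n (q + (r : Fin (n + 3))) * u r with hu0
      have hu0unit : UnitF u0 := fun r =>
        unit_mul (unit_mul (eps_unit _) (eps_unit _)) (hu r)
      have h1 := W_conj1 (ih u0 hu0unit)
      rw [fan_conj1] at h1
      have he : fanMat n (q - 1) t
          (fun r => eps n (q - 1) * eps n (q + (r : Fin (n + 3))) * u0 r) =
          fanMat n (q - 1) t u := by
        refine fanMat_congr fun r _ => ?_
        show eps n (q - 1) * eps n (q + (r : Fin (n + 3))) *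
            (eps n (q - 1) * eps n (q + (r : Fin (n + 3))) * u r) = u r
        have e1 := eps_mul_self (n := n) (q - 1)
        have e2 := eps_mul_self (n := n) (q + (r : Fin (n + 3)))
        linear_combination (eps n (q + (r : Fin (n + 3))) *
          eps n (q + (r : Fin (n + 3))) * u r) * e1 + u r * e2
      rw [he] at h1
      rw [hq]
      exact h1.mono (by omega)

/-! ### key fanVec evaluations -/

lemma fanVec_zero_end (t : ℕ) (ht : t < n + 3) (u : ℕ → ℤ) :
    fanVec n ((0 : Fin (n + 3)) - ((t + 1 : ℕ) : Fin (n + 3))) (t + 1) u 0 = u t := by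
  set p : Fin (n + 3) := (0 : Fin (n + 3)) - ((t + 1 : ℕ) : Fin (n + 3)) with hp
  rw [fanVec]
  rw [Finset.sum_eq_single t]
  · rw [if_pos (by rw [hp]; push_cast; ring)]
  · intro r hr hrt
    rw [if_neg]
    intro h
    rw [hp] at h
    push_cast at h
    have : (r : Fin (n + 3)) = (t : Fin (n + 3)) := by linear_combination -h
    exact hrt (natCast_inj_fin (by have := Finset.mem_range.mp hr; omega) ht this)
  · intro h; exact absurd (Finset.self_mem_range_succ t) h

lemma fanVec_self (t : ℕ) (ht : t ≤ n + 2) (p : Fin (n + 3)) (u : ℕ → ℤ) :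
    fanVec n p t u p = 0 := by
  rw [fanVec]
  apply Finset.sum_eq_zero
  intro r hr
  rw [if_neg]
  intro h
  have h1 : ((r + 1 : ℕ) : Fin (n + 3)) = 0 := by push_cast; linear_combination -h
  exact natCast_ne_zero_fin (by omega)
    (by have := Finset.mem_range.mp hr; omega) h1

/-! ### the sandwich step -/

lemma fan_sandwich (t : ℕ) (ht : t + 2 < n + 3) (u : ℕ → ℤ) (c : ℤ) :
    (1 + single 0 1 c) *
      fanMat n ((0 : Fin (n + 3)) - ((t + 1 : ℕ) : Fin (n + 3))) (t + 1) u *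
      (1 + single 0 1 (-c)) =
    fanMat n ((0 : Fin (n + 3)) - ((t + 1 : ℕ) : Fin (n + 3))) (t + 2)
      (fun r => if r = t + 1 then -(c * u t) else u r) := by
  set p : Fin (n + 3) := (0 : Fin (n + 3)) - ((t + 1 : ℕ) : Fin (n + 3)) with hp
  have hp1 : p ≠ 1 := by
    intro h
    have h2 : ((t + 2 : ℕ) : Fin (n + 3)) = 0 := by
      rw [hp] at h; push_cast at h ⊢; linear_combination -h
    exact natCast_ne_zero_fin (by omega) ht h2
  set X : Matrix (Fin (n + 3)) (Fin (n + 3)) ℤ :=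
    single (0 : Fin (n + 3)) (1 : Fin (n + 3)) c with hX
  set R : Matrix (Fin (n + 3)) (Fin (n + 3)) ℤ :=
    Matrix.of (fun a b => if a = p then fanVec n p (t + 1) u b else 0) with hR
  have hXneg : single (0 : Fin (n + 3)) (1 : Fin (n + 3)) (-c) = -X := by
    rw [hX]
    ext a b
    simp only [single, Matrix.of_apply, Matrix.neg_apply]
    split_ifs <;> simp
  have h1 : X * R = 0 := by
    rw [hX, hR]
    ext a b
    rw [Matrix.mul_apply, Matrix.zero_apply]
    apply Finset.sum_eq_zero
    intro k _
    simp only [single, Matrix.of_apply]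
    by_cases h : (0 : Fin (n + 3)) = a ∧ (1 : Fin (n + 3)) = k
    · rw [if_pos h, if_neg, mul_zero]
      intro hk
      exact hp1 (h.2.trans hk).symm
    · rw [if_neg h, zero_mul]
  have h2 : X * X = 0 := by
    rw [hX]; exact Matrix.single_mul_single_of_ne (h := one_ne_zero_fin) ..
  have e1 : (1 + X) * (1 + R) = 1 + X + R := by
    rw [mul_add, mul_one, add_mul, one_mul, h1, add_zero]
  have e2 : (1 + X + R) * (1 - X) = 1 + R - R * X := by
    rw [mul_sub, mul_one, add_mul, add_mul, one_mul, h2, add_zero]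
    abel
  have hfan1 : fanMat n p (t + 1) u = 1 + R := rfl
  have hcol : p + 1 + ((t + 1 : ℕ) : Fin (n + 3)) = 1 := by
    rw [hp]; push_cast; ring
  have hRX : R * X = Matrix.of
      (fun a b => if a = p then (if b = 1 then u t * c else 0) else 0) := by
    rw [hR, hX]
    ext a b
    rw [Matrix.mul_apply, Matrix.of_apply]
    rw [Finset.sum_eq_single (0 : Fin (n + 3))]
    · rw [Matrix.of_apply]
      have hv : fanVec n p (t + 1) u 0 = u t := by
        rw [hp]; exact fanVec_zero_end t (by omega) u
      rw [show (single (0 : Fin (n + 3)) (1 : Fin (n + 3)) c) 0 b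
          = if b = 1 then c else 0 by
        simp only [single, Matrix.of_apply, true_and]
        by_cases hb : b = 1
        · rw [if_pos hb.symm, if_pos hb]
        · rw [if_neg (fun h => hb h.symm), if_neg hb]]
      by_cases hap : a = p
      · rw [if_pos hap, if_pos hap, hv]
        by_cases hb : b = 1 <;> simp [hb]
      · rw [if_neg hap, if_neg hap, zero_mul]
    · intro k _ hk
      rw [show (single (0 : Fin (n + 3)) (1 : Fin (n + 3)) c) k b = 0 by
        simp only [single, Matrix.of_apply]
        rw [if_neg (fun h => hk h.1.symm)], mul_zero]
    · intro h; exact absurd (Finset.mem_univ _) h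
  rw [hfan1, hXneg, ← sub_eq_add_neg, e1, e2, hRX, fanMat]
  have hsplit : ∀ b, fanVec n p (t + 2)
      (fun r => if r = t + 1 then -(c * u t) else u r) b =
      fanVec n p (t + 1) u b + (if b = 1 then -(c * u t) else 0) := by
    intro b
    rw [fanVec, Finset.sum_range_succ, if_pos rfl, fanVec]
    congr 1
    · refine Finset.sum_congr rfl fun r hr => ?_
      have hrne : r ≠ t + 1 := by have := Finset.mem_range.mp hr; omega
      rw [if_neg hrne]
    · rw [hcol]
  ext a b
  rw [Matrix.sub_apply, Matrix.add_apply, Matrix.add_apply, Matrix.of_apply,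
    Matrix.of_apply, hR, Matrix.of_apply]
  by_cases hap : a = p
  · rw [if_pos hap, if_pos hap, if_pos hap, hsplit b]
    by_cases hb : b = 1
    · rw [if_pos hb, if_pos hb]; ring
    · rw [if_neg hb, if_neg hb]; ring
  · rw [if_neg hap, if_neg hap, if_neg hap]; ring

/-! ### the main induction: existence of fan words -/

lemma fan_exists : ∀ t : ℕ, t + 1 ≤ n + 2 → ∀ u, UnitF u →
    W n (4 * t + 3)
      (fanMat n ((0 : Fin (n + 3)) - ((t + 1 : ℕ) : Fin (n + 3))) (t + 1) u) := by
  intro t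
  induction t with
  | zero =>
      intro _ u hu
      set c : ℤ := eps n ((0 : Fin (n + 3)) - 1) * eps n 0 * u 0 with hc
      have hcu : c = 1 ∨ c = -1 :=
        unit_mul (unit_mul (eps_unit _) (eps_unit _)) (hu 0)
      have h1 := W_conj1 (W_A (n := n) c hcu)
      have hA : (1 : Matrix (Fin (n + 3)) (Fin (n + 3)) ℤ) + single 0 1 c =
          fanMat n 0 1 (fun _ => c) := by
        rw [fanMat_one, zero_add]
      rw [hA, fan_conj1] at h1
      have he : fanMat n ((0 : Fin (n + 3)) - 1) 1
          (fun r => eps n ((0 : Fin (n + 3)) - 1) * eps n (0 + (r : Fin (n + 3))) * c) =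
          fanMat n ((0 : Fin (n + 3)) - ((0 + 1 : ℕ) : Fin (n + 3))) 1 u := by
        rw [show ((0 + 1 : ℕ) : Fin (n + 3)) = 1 by push_cast; ring]
        refine fanMat_congr fun r hr => ?_
        interval_cases r
        show eps n ((0 : Fin (n + 3)) - 1) * eps n (0 + ((0 : ℕ) : Fin (n + 3))) * c = u 0
        rw [hc, show (0 + ((0 : ℕ) : Fin (n + 3))) = 0 by push_cast; ring]
        have e1 := eps_mul_self (n := n) ((0 : Fin (n + 3)) - 1)
        have e2 := eps_mul_self (n := n) (0 : Fin (n + 3))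
        linear_combination (eps n 0 * eps n 0 * u 0) * e1 + u 0 * e2
      rw [he] at h1
      exact h1.mono (by omega)
  | succ t ih =>
      intro ht u hu
      set p : Fin (n + 3) := (0 : Fin (n + 3)) - ((t + 1 : ℕ) : Fin (n + 3)) with hp
      set upre : ℕ → ℤ :=
        fun r => eps n (p - 1) * eps n (p + (r : Fin (n + 3))) * u r with hupre
      have hupreu : UnitF upre := fun r =>
        unit_mul (unit_mul (eps_unit _) (eps_unit _)) (hu r)
      set c : ℤ := -(upre (t + 1)) * upre t with hc
      have hcu : c = 1 ∨ c = -1 := unit_mul (unit_neg (hupreu (t + 1))) (hupreu t)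
      have hcneg : -c = 1 ∨ -c = -1 := unit_neg hcu
      have hW0 := ih (by omega) upre hupreu
      have hW1 := ((W_A (n := n) c hcu).mul hW0).mul (W_A (n := n) (-c) hcneg)
      rw [fan_sandwich t (by omega) upre c] at hW1
      have he1 : fanMat n p (t + 2) (fun r => if r = t + 1 then -(c * upre t) else upre r) =
          fanMat n p (t + 2) upre := by
        refine fanMat_congr fun r _ => ?_
        rcases eq_or_ne r (t + 1) with h | h
        · subst h
          rw [if_pos rfl, hc]
          have := unit_sq (hupreu t)
          linear_combination upre (t + 1) * this
        · rw [if_neg h]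
      rw [he1] at hW1
      have hW2 := W_conj1 hW1
      rw [fan_conj1] at hW2
      have he2 : fanMat n (p - 1) (t + 2)
          (fun r => eps n (p - 1) * eps n (p + (r : Fin (n + 3))) * upre r) =
          fanMat n ((0 : Fin (n + 3)) - ((t + 1 + 1 : ℕ) : Fin (n + 3))) (t + 2) u := by
        rw [show (0 : Fin (n + 3)) - ((t + 1 + 1 : ℕ) : Fin (n + 3)) = p - 1 by
          rw [hp]; push_cast; ring]
        refine fanMat_congr fun r _ => ?_
        show eps n (p - 1) * eps n (p + (r : Fin (n + 3))) *
            (eps n (p - 1) * eps n (p + (r : Fin (n + 3))) * u r) = u r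
        have e1 := eps_mul_self (n := n) (p - 1)
        have e2 := eps_mul_self (n := n) (p + (r : Fin (n + 3)))
        linear_combination (eps n (p + (r : Fin (n + 3))) *
          eps n (p + (r : Fin (n + 3))) * u r) * e1 + u r * e2
      rw [he2] at hW2
      exact hW2.mono (by omega)

/-! ### multiplying two fans -/

lemma fan_mul (p : Fin (n + 3)) (t1 t2 : ℕ) (u1 u2 : ℕ → ℤ)
    (h2 : fanVec n p t2 u2 p = 0) :
    fanMat n p t2 u2 * fanMat n p t1 u1 =
      1 + Matrix.of (fun a b =>
        if a = p then fanVec n p t2 u2 b + fanVec n p t1 u1 b else 0) := by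
  rw [fanMat, fanMat]
  set R2 : Matrix (Fin (n + 3)) (Fin (n + 3)) ℤ :=
    Matrix.of (fun a b => if a = p then fanVec n p t2 u2 b else 0) with hR2
  set R1 : Matrix (Fin (n + 3)) (Fin (n + 3)) ℤ :=
    Matrix.of (fun a b => if a = p then fanVec n p t1 u1 b else 0) with hR1
  have h0 : R2 * R1 = 0 := by
    rw [hR2, hR1]
    ext a b
    rw [Matrix.mul_apply, Matrix.zero_apply]
    rw [Finset.sum_eq_single p]
    · rw [Matrix.of_apply, Matrix.of_apply]
      by_cases hap : a = p
      · rw [if_pos hap, h2, zero_mul]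
      · rw [if_neg hap, zero_mul]
    · intro k _ hk
      rw [Matrix.of_apply (f := fun a b => if a = p then fanVec n p t1 u1 b else 0),
        if_neg hk, mul_zero]
    · intro h; exact absurd (Finset.mem_univ _) h
  rw [mul_add, mul_one, add_mul, one_mul, h0, add_zero]
  rw [add_assoc, add_comm R2 R1]
  congr 1
  ext a b
  show R1 a b + R2 a b = _
  rw [hR1, hR2]
  simp only [Matrix.of_apply]
  by_cases hap : a = p
  · rw [if_pos hap, if_pos hap, if_pos hap, add_comm]
  · rw [if_neg hap, if_neg hap, if_neg hap, add_zero]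

lemma fan_vec_sum (p : Fin (n + 3)) (d : ℕ) (hd : 1 ≤ d) (b : Fin (n + 3)) :
    fanVec n p (d - 1) (fun _ => (-1 : ℤ)) b + fanVec n p d (fun _ => (1 : ℤ)) b =
      if b = p + ((d : ℕ) : Fin (n + 3)) then 1 else 0 := by
  obtain ⟨k, rfl⟩ : ∃ k, d = k + 1 := ⟨d - 1, by omega⟩
  simp only [Nat.add_sub_cancel]
  rw [fanVec, fanVec, Finset.sum_range_succ]
  rw [show p + (((k + 1 : ℕ)) : Fin (n + 3)) = p + 1 + ((k : ℕ) : Fin (n + 3)) by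
    push_cast; ring]
  have hneg : (∑ r ∈ Finset.range k,
      if b = p + 1 + (r : Fin (n + 3)) then (-1 : ℤ) else 0) =
      -(∑ r ∈ Finset.range k, if b = p + 1 + (r : Fin (n + 3)) then (1 : ℤ) else 0) := by
    rw [← Finset.sum_neg_distrib]
    exact Finset.sum_congr rfl fun r _ => by split_ifs <;> ring
  rw [hneg]
  ring

lemma natCast_size_fin : ((n + 3 : ℕ) : Fin (n + 3)) = 0 := by
  apply Fin.ext
  rw [Fin.val_natCast]
  simp

end EW

/-- For every `N ≥ 3` (here `N = n+3`) and all `i ≠ j`, the elementary matrix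
`e_{ij} ∈ SL_N(ℤ)` is a product of at most `10N` factors from `{A^{±1}, B^{±1}}`. -/
theorem elementary_as_word_in_A_B (n : ℕ) (i j : Fin (n + 3)) (hij : i ≠ j) :
    ∃ l : List (Matrix (Fin (n + 3)) (Fin (n + 3)) ℤ),
      (∀ x ∈ l, x = Amat n ∨ x = (Amat n)⁻¹ ∨ x = Bmat n ∨ x = (Bmat n)⁻¹) ∧
      l.prod = 1 + single i j 1 ∧ l.length ≤ 10 * (n + 3) := by
  open EW in
  classical
  set dv : ℕ := (j - i).val with hdv
  set jv : ℕ := j.val with hjv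
  have hsub : (j - i : Fin (n + 3)) ≠ 0 := sub_ne_zero.mpr (Ne.symm hij)
  have hdv1 : 1 ≤ dv := by
    rcases Nat.eq_zero_or_pos dv with h | h
    · rw [hdv] at h
      exact absurd (Fin.ext (by rw [Fin.val_zero]; exact h)) hsub
    · omega
  have hdvN : dv ≤ n + 2 := by have := (j - i).isLt; omega
  have hjvN : jv ≤ n + 2 := by have := j.isLt; omega
  have hcast_d : ((dv : ℕ) : Fin (n + 3)) = j - i := Fin.cast_val_eq_self _
  have hcast_j : ((jv : ℕ) : Fin (n + 3)) = j := Fin.cast_val_eq_self _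
  set u1 : ℕ → ℤ := fun _ => (1 : ℤ) with hu1
  set u2 : ℕ → ℤ := fun _ => (-1 : ℤ) with hu2
  have hu1unit : UnitF u1 := fun _ => Or.inl rfl
  have hu2unit : UnitF u2 := fun _ => Or.inr rfl
  -- the key assembling step
  have assemble : ∀ m1 m2 : ℕ, W n m1 (fanMat n i dv u1) →
      W n m2 (fanMat n i (dv - 1) u2) → m2 + m1 ≤ 10 * (n + 3) →
      ∃ l : List (Matrix (Fin (n + 3)) (Fin (n + 3)) ℤ),
        (∀ x ∈ l, x = Amat n ∨ x = (Amat n)⁻¹ ∨ x = Bmat n ∨ x = (Bmat n)⁻¹) ∧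
        l.prod = 1 + single i j 1 ∧ l.length ≤ 10 * (n + 3) := by
    intro m1 m2 h1 h2 hm
    have hvself : fanVec n i (dv - 1) u2 i = 0 := fanVec_self (dv - 1) (by omega) i u2
    have hprod := h2.mul h1
    rw [fan_mul i dv (dv - 1) u1 u2 hvself] at hprod
    have hmat : (1 : Matrix (Fin (n + 3)) (Fin (n + 3)) ℤ) + Matrix.of (fun a b =>
        if a = i then fanVec n i (dv - 1) u2 b + fanVec n i dv u1 b else 0) =
        1 + single i j 1 := by
      congr 1
      ext a b
      rw [Matrix.of_apply, single, Matrix.of_apply]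
      by_cases hap : a = i
      · rw [if_pos hap, fan_vec_sum i dv hdv1 b,
          show i + ((dv : ℕ) : Fin (n + 3)) = j by rw [hcast_d]; ring]
        by_cases hb : b = j
        · rw [if_pos hb, if_pos ⟨hap.symm, hb.symm⟩]
        · rw [if_neg hb, if_neg (fun h => hb h.2.symm)]
      · rw [if_neg hap, if_neg (fun h => hap h.1.symm)]
    rw [hmat] at hprod
    obtain ⟨l, hg, hpr, hl⟩ := hprod.mono hm
    exact ⟨l, hg, hpr, hl⟩
  -- base words for the two fans
  have hX1base : ∀ u, UnitF u →
      W n (4 * (dv - 1) + 3) (fanMat n (0 - ((dv : ℕ) : Fin (n + 3))) dv u) := by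
    have h := fan_exists (n := n) (dv - 1) (by omega)
    simp only [Nat.sub_add_cancel hdv1] at h
    exact h
  rcases Nat.lt_or_ge dv 2 with hdlt | hdge
  · -- dv = 1 : a single letter suffices
    have hdv_eq : dv = 1 := by omega
    have hj_eq : j = i + 1 := by
      have h := hcast_d
      rw [hdv_eq, Nat.cast_one] at h
      linear_combination -h
    have hfan1 : fanMat n i 1 u1 = 1 + single i j 1 := by
      rw [fanMat_one, hj_eq, hu1]
    rcases Nat.lt_or_ge (2 * jv) (n + 3) with hjs | hjs
    · have h1 := fan_shift_up (hX1base) jv u1 hu1unit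
      rw [hdv_eq] at h1
      rw [show (0 : Fin (n + 3)) - ((1 : ℕ) : Fin (n + 3)) + ((jv : ℕ) : Fin (n + 3)) = i by
        rw [hcast_j, Nat.cast_one]
        have h := hcast_d
        rw [hdv_eq, Nat.cast_one] at h
        linear_combination -h] at h1
      rw [hfan1] at h1
      obtain ⟨l, hg, hpr, hl⟩ := h1.mono (show 4 * (1 - 1) + 3 + 2 * jv ≤ 10 * (n + 3) by omega)
      exact ⟨l, hg, hpr, hl⟩
    · have h1 := fan_shift_down (hX1base) (n + 3 - jv) u1 hu1unit
      rw [hdv_eq] at h1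
      rw [show (0 : Fin (n + 3)) - ((1 : ℕ) : Fin (n + 3)) - (((n + 3 - jv : ℕ)) : Fin (n + 3)) = i by
        rw [Nat.cast_sub (by omega), natCast_size_fin, hcast_j, Nat.cast_one]
        have h := hcast_d
        rw [hdv_eq, Nat.cast_one] at h
        linear_combination -h] at h1
      rw [hfan1] at h1
      obtain ⟨l, hg, hpr, hl⟩ := h1.mono
        (show 4 * (1 - 1) + 3 + 2 * (n + 3 - jv) ≤ 10 * (n + 3) by omega)
      exact ⟨l, hg, hpr, hl⟩
  · -- dv ≥ 2 : product of two fans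
    have hX2base : ∀ u, UnitF u →
        W n (4 * (dv - 2) + 3) (fanMat n (0 - (((dv - 1) : ℕ) : Fin (n + 3))) (dv - 1) u) := by
      have h := fan_exists (n := n) (dv - 2) (by omega)
      simp only [show dv - 2 + 1 = dv - 1 by omega] at h
      exact h
    have hcast_d1 : (((dv - 1) : ℕ) : Fin (n + 3)) = (j - i) - 1 := by
      rw [Nat.cast_sub hdv1, hcast_d, Nat.cast_one]
    rcases Nat.eq_zero_or_pos jv with hjz | hjpos
    · -- j = 0
      have hj0 : j = 0 := Fin.ext (by rw [Fin.val_zero]; exact hjz)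
      have h1 := fan_shift_up (hX1base) 0 u1 hu1unit
      rw [show (0 : Fin (n + 3)) - ((dv : ℕ) : Fin (n + 3)) + ((0 : ℕ) : Fin (n + 3)) = i by
        rw [hcast_d, Nat.cast_zero, hj0]; ring] at h1
      have h2 := fan_shift_down (hX2base) 1 u2 hu2unit
      rw [show (0 : Fin (n + 3)) - (((dv - 1) : ℕ) : Fin (n + 3)) - ((1 : ℕ) : Fin (n + 3)) = i by
        rw [hcast_d1, Nat.cast_one, hj0]; ring] at h2
      exact assemble _ _ h1 h2 (by omega)
    · rcases Nat.lt_or_ge (2 * jv) (n + 3) with hjs | hjs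
      · -- shift up
        have h1 := fan_shift_up (hX1base) jv u1 hu1unit
        rw [show (0 : Fin (n + 3)) - ((dv : ℕ) : Fin (n + 3)) + ((jv : ℕ) : Fin (n + 3)) = i by
          rw [hcast_d, hcast_j]; ring] at h1
        have h2 := fan_shift_up (hX2base) (jv - 1) u2 hu2unit
        rw [show (0 : Fin (n + 3)) - (((dv - 1) : ℕ) : Fin (n + 3)) +
            (((jv - 1) : ℕ) : Fin (n + 3)) = i by
          rw [hcast_d1, Nat.cast_sub hjpos, hcast_j, Nat.cast_one]; ring] at h2
        exact assemble _ _ h1 h2 (by omega)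
      · -- shift down
        have h1 := fan_shift_down (hX1base) (n + 3 - jv) u1 hu1unit
        rw [show (0 : Fin (n + 3)) - ((dv : ℕ) : Fin (n + 3)) -
            (((n + 3 - jv : ℕ)) : Fin (n + 3)) = i by
          rw [Nat.cast_sub (by omega), natCast_size_fin, hcast_d, hcast_j]; ring] at h1
        have h2 := fan_shift_down (hX2base) (n + 3 - jv + 1) u2 hu2unit
        rw [show (0 : Fin (n + 3)) - (((dv - 1) : ℕ) : Fin (n + 3)) -
            (((n + 3 - jv + 1 : ℕ)) : Fin (n + 3)) = i by
          rw [hcast_d1, show ((n + 3 - jv + 1 : ℕ) : Fin (n + 3)) =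
              ((n + 3 - jv : ℕ) : Fin (n + 3)) + 1 by push_cast; ring,
            Nat.cast_sub (show jv ≤ n + 3 by omega), natCast_size_fin, hcast_j]
          ring] at h2
        exact assemble _ _ h1 h2 (by omega)
end
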